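/- Let K be an algebraically closed field with a non-Archimedean absolute value, let f : U → V be a polynomial map of degree e ≥ 1 between disks, with e less than the residue characteristic of K if positive, and let V₁, V₂ be disjoint disks contained in V. Then there exist j ∈ {1,2} and a disk component U_j of f⁻¹(V_j) such that f restricts to a bijection from U_j onto V_j. -/

import Mathlib

open Polynomial
open scoped Classical

set_option linter.unusedSectionVars false
set_option linter.unusedVariables false
set_option maxHeartbeats 1000000

/-- `D` is a disk (open or closed) for the absolute value `v`. -/
def IsDisk {K : Type*} [Field K] (v : AbsoluteValue K ℝ) (D : Set K) : Prop :=
  ∃ a : K, ∃ r : ℝ, 0 < r ∧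
    (D = {z : K | v (z - a) < r} ∨ D = {z : K | v (z - a) ≤ r})

/-- `D` is a disk component of `S`: a disk contained in `S` that is maximal among
disks contained in `S`. -/
def IsDiskComponent {K : Type*} [Field K] (v : AbsoluteValue K ℝ)
    (S D : Set K) : Prop :=
  IsDisk v D ∧ D ⊆ S ∧ ∀ D' : Set K, IsDisk v D' → D ⊆ D' → D' ⊆ S → D' = D

/-- `D` is a disk (open or closed) of radius `r` for the absolute value `v`. -/
def IsDiskOfRadius {K : Type*} [Field K] (v : AbsoluteValue K ℝ) (D : Set K)
    (r : ℝ) : Prop :=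
  0 < r ∧ ∃ a : K, D = {z : K | v (z - a) < r} ∨ D = {z : K | v (z - a) ≤ r}

/-- The number of preimages of `y` under `f` lying in `U`, counted with multiplicity. -/
noncomputable def mapDegreeOn {K : Type*} [Field K] (f : K[X]) (U : Set K) (y : K) : ℕ :=
  Multiset.card (Multiset.filter (· ∈ U) ((f - C y).roots))


section Prelim
variable {K : Type*} [Field K] (v : AbsoluteValue K ℝ)

/-- product of `X - C z` over a multiset -/
noncomputable def mprod (s : Multiset K) : K[X] := (s.map (fun z => X - C z)).prod

lemma mprod_zero : mprod (0 : Multiset K) = 1 := by simp [mprod]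

lemma mprod_cons (a : K) (s : Multiset K) :
    mprod (a ::ₘ s) = (X - C a) * mprod s := by
  simp [mprod]

lemma coeff_mprod_cons_zero (a : K) (s : Multiset K) :
    (mprod (a ::ₘ s)).coeff 0 = -a * (mprod s).coeff 0 := by
  rw [mprod_cons, sub_mul, coeff_sub, coeff_X_mul_zero, coeff_C_mul]
  ring

lemma coeff_mprod_cons_succ (a : K) (s : Multiset K) (m : ℕ) :
    (mprod (a ::ₘ s)).coeff (m + 1) =
      (mprod s).coeff m - a * (mprod s).coeff (m + 1) := by
  rw [mprod_cons, sub_mul, coeff_sub, coeff_X_mul, coeff_C_mul]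

variable {v}

lemma vsub_le (hna : IsNonarchimedean ⇑v) (x y : K) :
    v (x - y) ≤ max (v x) (v y) := by
  have := hna x (-y)
  simpa [sub_eq_add_neg] using this

/-- dominance: if `v y < v x` then `v (x - y) = v x`. -/
lemma vsub_dom (hna : IsNonarchimedean ⇑v) {x y : K} (h : v y < v x) :
    v (x - y) = v x := by
  refine le_antisymm ((vsub_le hna x y).trans (by simp [le_of_lt h])) ?_
  by_contra hlt
  push_neg at hlt
  have : v x ≤ max (v (x - y)) (v y) := by
    have := hna (x - y) y
    simpa using this
  rcases max_cases (v (x - y)) (v y) with ⟨h1, _⟩ | ⟨h1, _⟩ <;> rw [h1] at this <;> linarith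

lemma vsub_dom' (hna : IsNonarchimedean ⇑v) {x y : K} (h : v x < v y) :
    v (x - y) = v y := by
  have : v (y - x) = v y := vsub_dom hna h
  rwa [← AbsoluteValue.map_neg v, neg_sub]


lemma vsub_mul_le (hna : IsNonarchimedean ⇑v) (x y : K) {T : ℝ} (hT : 0 ≤ T) :
    v (x - y) * T ≤ max (v x * T) (v y * T) := by
  rw [← max_mul_of_nonneg _ _ hT]
  exact mul_le_mul_of_nonneg_right (vsub_le hna x y) hT

end Prelim

section Master
variable {K : Type*} [Field K] {v : AbsoluteValue K ℝ}

/-- outside product for closed master -/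
noncomputable def PiLe (v : AbsoluteValue K ℝ) (t : ℝ) (s : Multiset K) : ℝ :=
  ((s.filter (fun z => t < v z)).map (fun z => v z)).prod

noncomputable def qLe (v : AbsoluteValue K ℝ) (t : ℝ) (s : Multiset K) : ℕ :=
  (s.filter (fun z => v z ≤ t)).card

noncomputable def MLe (v : AbsoluteValue K ℝ) (t : ℝ) (s : Multiset K) : ℝ :=
  PiLe v t s * t ^ qLe v t s

lemma PiLe_pos {t : ℝ} (ht : 0 < t) (s : Multiset K) : 0 < PiLe v t s := by
  unfold PiLe
  refine Multiset.prod_pos ?_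
  intro x hx
  rcases Multiset.mem_map.1 hx with ⟨z, hz, rfl⟩
  have := (Multiset.mem_filter.1 hz).2
  linarith

lemma MLe_pos {t : ℝ} (ht : 0 < t) (s : Multiset K) : 0 < MLe v t s :=
  mul_pos (PiLe_pos ht s) (pow_pos ht _)

lemma master_le (hna : IsNonarchimedean ⇑v) {t : ℝ} (ht : 0 < t) (s : Multiset K) :
    (∀ m, v ((mprod s).coeff m) * t ^ m ≤ MLe v t s)
    ∧ (∀ m, qLe v t s < m → v ((mprod s).coeff m) * t ^ m < MLe v t s)
    ∧ v ((mprod s).coeff (qLe v t s)) * t ^ (qLe v t s) = MLe v t s := by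
  induction s using Multiset.induction_on with
  | empty =>
    have h0 : qLe v t (0:Multiset K) = 0 := by simp [qLe]
    have h1 : MLe v t (0:Multiset K) = 1 := by simp [MLe, PiLe, h0]
    refine ⟨?_, ?_, ?_⟩
    · intro m
      match m with
      | 0 => simp [mprod_zero, h1]
      | m+1 =>
        rw [mprod_zero, h1, Polynomial.coeff_one]
        simp
    · intro m hm
      rw [h0] at hm
      match m, hm with
      | m+1, _ =>
        rw [mprod_zero, h1, Polynomial.coeff_one]
        simp
    · rw [mprod_zero, h0, h1, Polynomial.coeff_one]
      simp
  | cons a s IH =>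
    obtain ⟨IHa, IHb, IHc⟩ := IH
    by_cases ha : v a ≤ t
    · have hq : qLe v t (a ::ₘ s) = qLe v t s + 1 := by
        simp [qLe, Multiset.filter_cons_of_pos (p := fun z => v z ≤ t) _ ha]
      have hM : MLe v t (a ::ₘ s) = MLe v t s * t := by
        have : PiLe v t (a ::ₘ s) = PiLe v t s := by
          simp only [PiLe, Multiset.filter_cons_of_neg (p := fun z => t < v z) _ (not_lt.2 ha)]
        simp [MLe, this, hq, pow_succ]; ring
      refine ⟨?_, ?_, ?_⟩
      · intro m
        match m with
        | 0 =>
          rw [coeff_mprod_cons_zero, hM]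
          simp only [pow_zero, mul_one]
          rw [v.map_mul, v.map_neg]
          calc v a * v ((mprod s).coeff 0) ≤ t * MLe v t s := by
                apply mul_le_mul ha (by simpa using IHa 0) (v.nonneg _) (le_of_lt ht)
            _ = MLe v t s * t := mul_comm _ _
        | m+1 =>
          rw [coeff_mprod_cons_succ, hM]
          refine le_trans (vsub_mul_le hna _ _ (by positivity)) (max_le ?_ ?_)
          · rw [pow_succ, ← mul_assoc]
            exact mul_le_mul_of_nonneg_right (IHa m) ht.le
          · rw [v.map_mul]
            have := IHa (m+1)
            nlinarith [pow_pos ht (m+1), v.nonneg ((mprod s).coeff (m+1)),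
              mul_le_mul_of_nonneg_right ha (v.nonneg ((mprod s).coeff (m+1)))]
      · intro m hm
        rw [hq] at hm
        match m, hm with
        | m+1, hm =>
          rw [coeff_mprod_cons_succ, hM]
          refine lt_of_le_of_lt (vsub_mul_le hna _ _ (by positivity)) (max_lt ?_ ?_)
          · rw [pow_succ, ← mul_assoc]
            exact mul_lt_mul_of_pos_right (IHb m (by omega)) ht
          · rw [v.map_mul]
            have hb := IHb (m+1) (by omega)
            nlinarith [pow_pos ht (m+1), v.nonneg ((mprod s).coeff (m+1)),
              mul_le_mul_of_nonneg_right ha (v.nonneg ((mprod s).coeff (m+1)))]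
      · rw [hq, hM, coeff_mprod_cons_succ]
        have hb := IHb (qLe v t s + 1) (by omega)
        have hdom : v (a * (mprod s).coeff (qLe v t s + 1)) <
            v ((mprod s).coeff (qLe v t s)) := by
          rw [v.map_mul]
          have hts : (t:ℝ) ^ (qLe v t s + 1) = t ^ (qLe v t s) * t := pow_succ t _
          nlinarith [pow_pos ht (qLe v t s), v.nonneg ((mprod s).coeff (qLe v t s + 1)),
            mul_le_mul_of_nonneg_right ha (v.nonneg ((mprod s).coeff (qLe v t s + 1)))]
        rw [vsub_dom hna hdom, pow_succ, ← mul_assoc, IHc]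
    · push_neg at ha
      have hq : qLe v t (a ::ₘ s) = qLe v t s := by
        simp only [qLe, Multiset.filter_cons_of_neg (p := fun z => v z ≤ t) _ (not_le.2 ha)]
      have hM : MLe v t (a ::ₘ s) = v a * MLe v t s := by
        have hPi : PiLe v t (a ::ₘ s) = v a * PiLe v t s := by
          simp only [PiLe, Multiset.filter_cons_of_pos (p := fun z => t < v z) _ ha,
            Multiset.map_cons, Multiset.prod_cons]
        rw [MLe, MLe, hPi, hq]; ring
      have hva : (0:ℝ) < v a := lt_trans ht ha
      refine ⟨?_, ?_, ?_⟩
      · intro m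
        match m with
        | 0 =>
          rw [coeff_mprod_cons_zero, hM]
          simp only [pow_zero, mul_one]
          rw [v.map_mul, v.map_neg]
          have := IHa 0
          simp only [pow_zero, mul_one] at this
          nlinarith
        | m+1 =>
          rw [coeff_mprod_cons_succ, hM]
          refine le_trans (vsub_mul_le hna _ _ (by positivity)) (max_le ?_ ?_)
          · rw [pow_succ, ← mul_assoc]
            calc v ((mprod s).coeff m) * t ^ m * t ≤ MLe v t s * t :=
                  mul_le_mul_of_nonneg_right (IHa m) ht.le
              _ ≤ v a * MLe v t s := by nlinarith [MLe_pos (v := v) ht s]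
          · rw [v.map_mul]
            have := IHa (m+1)
            nlinarith [pow_pos ht (m+1), v.nonneg ((mprod s).coeff (m+1))]
      · intro m hm
        rw [hq] at hm
        match m, hm with
        | m+1, hm =>
          rw [coeff_mprod_cons_succ, hM]
          refine lt_of_le_of_lt (vsub_mul_le hna _ _ (by positivity)) (max_lt ?_ ?_)
          · rw [pow_succ, ← mul_assoc]
            calc v ((mprod s).coeff m) * t ^ m * t ≤ MLe v t s * t :=
                  mul_le_mul_of_nonneg_right (IHa m) ht.le
              _ < v a * MLe v t s := by nlinarith [MLe_pos (v := v) ht s]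
          · rw [v.map_mul]
            have hb := IHb (m+1) (by omega)
            nlinarith [pow_pos ht (m+1), v.nonneg ((mprod s).coeff (m+1))]
      · rw [hq, hM]
        match hqs : qLe v t s with
        | 0 =>
          rw [coeff_mprod_cons_zero]
          simp only [pow_zero, mul_one]
          rw [v.map_mul, v.map_neg]
          have := IHc
          rw [hqs] at this
          simp only [pow_zero, mul_one] at this
          rw [this]
        | m+1 =>
          rw [coeff_mprod_cons_succ]
          have hc := IHc
          rw [hqs, Nat.succ_eq_add_one] at hc
          have hpos : 0 < v ((mprod s).coeff (m+1)) := by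
            nlinarith [pow_pos ht (m+1), MLe_pos (v := v) ht s,
              v.nonneg ((mprod s).coeff (m+1))]
          have hdom : v ((mprod s).coeff m) < v (a * (mprod s).coeff (m + 1)) := by
            rw [v.map_mul]
            have h1 : v ((mprod s).coeff m) * t ^ m ≤
                (v ((mprod s).coeff (m+1)) * t) * t ^ m := by
              rw [mul_assoc, mul_comm t (t^m), ← pow_succ]
              exact (IHa m).trans_eq hc.symm
            have h2 := le_of_mul_le_mul_right h1 (pow_pos ht m)
            nlinarith
          rw [vsub_dom' hna hdom, v.map_mul, mul_assoc, hc]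

/-- outside product for open master -/
noncomputable def PiLt (v : AbsoluteValue K ℝ) (t : ℝ) (s : Multiset K) : ℝ :=
  ((s.filter (fun z => t ≤ v z)).map (fun z => v z)).prod

noncomputable def qLt (v : AbsoluteValue K ℝ) (t : ℝ) (s : Multiset K) : ℕ :=
  (s.filter (fun z => v z < t)).card

noncomputable def MLt (v : AbsoluteValue K ℝ) (t : ℝ) (s : Multiset K) : ℝ :=
  PiLt v t s * t ^ qLt v t s

lemma PiLt_pos {t : ℝ} (ht : 0 < t) (s : Multiset K) : 0 < PiLt v t s := by
  unfold PiLt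
  refine Multiset.prod_pos ?_
  intro x hx
  rcases Multiset.mem_map.1 hx with ⟨z, hz, rfl⟩
  have := (Multiset.mem_filter.1 hz).2
  linarith

lemma MLt_pos {t : ℝ} (ht : 0 < t) (s : Multiset K) : 0 < MLt v t s :=
  mul_pos (PiLt_pos ht s) (pow_pos ht _)

lemma master_lt (hna : IsNonarchimedean ⇑v) {t : ℝ} (ht : 0 < t) (s : Multiset K) :
    (∀ m, v ((mprod s).coeff m) * t ^ m ≤ MLt v t s)
    ∧ (∀ m, m < qLt v t s → v ((mprod s).coeff m) * t ^ m < MLt v t s)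
    ∧ v ((mprod s).coeff (qLt v t s)) * t ^ (qLt v t s) = MLt v t s := by
  induction s using Multiset.induction_on with
  | empty =>
    have h0 : qLt v t (0:Multiset K) = 0 := by simp [qLt]
    have h1 : MLt v t (0:Multiset K) = 1 := by simp [MLt, PiLt, h0]
    refine ⟨?_, ?_, ?_⟩
    · intro m
      match m with
      | 0 => simp [mprod_zero, h1]
      | m+1 =>
        rw [mprod_zero, h1, Polynomial.coeff_one]
        simp
    · intro m hm
      rw [h0] at hm
      omega
    · rw [mprod_zero, h0, h1, Polynomial.coeff_one]
      simp
  | cons a s IH =>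
    obtain ⟨IHa, IHb, IHc⟩ := IH
    by_cases ha : v a < t
    · have hq : qLt v t (a ::ₘ s) = qLt v t s + 1 := by
        simp only [qLt, Multiset.filter_cons_of_pos (p := fun z => v z < t) _ ha,
          Multiset.card_cons]
      have hM : MLt v t (a ::ₘ s) = MLt v t s * t := by
        have : PiLt v t (a ::ₘ s) = PiLt v t s := by
          simp only [PiLt, Multiset.filter_cons_of_neg (p := fun z => t ≤ v z) _ (not_le.2 ha)]
        rw [MLt, MLt, this, hq, pow_succ]; ring
      refine ⟨?_, ?_, ?_⟩
      · intro m
        match m with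
        | 0 =>
          rw [coeff_mprod_cons_zero, hM]
          simp only [pow_zero, mul_one]
          rw [v.map_mul, v.map_neg]
          calc v a * v ((mprod s).coeff 0) ≤ t * MLt v t s := by
                apply mul_le_mul ha.le (by simpa using IHa 0) (v.nonneg _) (le_of_lt ht)
            _ = MLt v t s * t := mul_comm _ _
        | m+1 =>
          rw [coeff_mprod_cons_succ, hM]
          refine le_trans (vsub_mul_le hna _ _ (by positivity)) (max_le ?_ ?_)
          · rw [pow_succ, ← mul_assoc]
            exact mul_le_mul_of_nonneg_right (IHa m) ht.le
          · rw [v.map_mul]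
            have := IHa (m+1)
            nlinarith [pow_pos ht (m+1), v.nonneg ((mprod s).coeff (m+1)),
              mul_le_mul_of_nonneg_right ha.le (v.nonneg ((mprod s).coeff (m+1)))]
      · intro m hm
        rw [hq] at hm
        match m with
        | 0 =>
          rw [coeff_mprod_cons_zero, hM]
          simp only [pow_zero, mul_one]
          rw [v.map_mul, v.map_neg]
          have h0 := IHa 0
          simp only [pow_zero, mul_one] at h0
          nlinarith [MLt_pos (v := v) ht s, v.nonneg a, v.nonneg ((mprod s).coeff 0)]
        | m+1 =>
          have hm' : m < qLt v t s := by omega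
          rw [coeff_mprod_cons_succ, hM]
          refine lt_of_le_of_lt (vsub_mul_le hna _ _ (by positivity)) (max_lt ?_ ?_)
          · rw [pow_succ, ← mul_assoc]
            exact mul_lt_mul_of_pos_right (IHb m hm') ht
          · rw [v.map_mul]
            have := IHa (m+1)
            nlinarith [pow_pos ht (m+1), v.nonneg ((mprod s).coeff (m+1)),
              MLt_pos (v := v) ht s, v.nonneg a]
      · rw [hq, hM, coeff_mprod_cons_succ]
        set q := qLt v t s with hqdef
        have hc := IHc
        have hvq : 0 < v ((mprod s).coeff q) := by
          nlinarith [pow_pos ht q, MLt_pos (v := v) ht s, v.nonneg ((mprod s).coeff q)]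
        have h1 : v ((mprod s).coeff (q+1)) * t ≤ v ((mprod s).coeff q) := by
          have h1' : v ((mprod s).coeff (q+1)) * t ^ (q+1) ≤ v ((mprod s).coeff q) * t ^ q :=
            (IHa (q+1)).trans_eq hc.symm
          rw [pow_succ, ← mul_assoc] at h1'
          have := le_of_mul_le_mul_right (by linarith [h1'] : v ((mprod s).coeff (q+1)) * t * t ^ q ≤ v ((mprod s).coeff q) * t ^ q) (pow_pos ht q)
          linarith
        have hdom : v (a * (mprod s).coeff (q + 1)) < v ((mprod s).coeff q) := by
          rw [v.map_mul]
          rcases lt_or_eq_of_le (v.nonneg ((mprod s).coeff (q+1))) with hpos | heq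
          · nlinarith
          · rw [← heq]; simpa using hvq
        rw [vsub_dom hna hdom, pow_succ, ← mul_assoc, hc]
    · push_neg at ha
      have hq : qLt v t (a ::ₘ s) = qLt v t s := by
        simp only [qLt, Multiset.filter_cons_of_neg (p := fun z => v z < t) _ (not_lt.2 ha)]
      have hM : MLt v t (a ::ₘ s) = v a * MLt v t s := by
        have hPi : PiLt v t (a ::ₘ s) = v a * PiLt v t s := by
          simp only [PiLt, Multiset.filter_cons_of_pos (p := fun z => t ≤ v z) _ ha,
            Multiset.map_cons, Multiset.prod_cons]
        rw [MLt, MLt, hPi, hq]; ring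
      have hva : (0:ℝ) < v a := lt_of_lt_of_le ht ha
      refine ⟨?_, ?_, ?_⟩
      · intro m
        match m with
        | 0 =>
          rw [coeff_mprod_cons_zero, hM]
          simp only [pow_zero, mul_one]
          rw [v.map_mul, v.map_neg]
          have := IHa 0
          simp only [pow_zero, mul_one] at this
          nlinarith
        | m+1 =>
          rw [coeff_mprod_cons_succ, hM]
          refine le_trans (vsub_mul_le hna _ _ (by positivity)) (max_le ?_ ?_)
          · rw [pow_succ, ← mul_assoc]
            calc v ((mprod s).coeff m) * t ^ m * t ≤ MLt v t s * t :=
                  mul_le_mul_of_nonneg_right (IHa m) ht.le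
              _ ≤ v a * MLt v t s := by nlinarith [MLt_pos (v := v) ht s]
          · rw [v.map_mul]
            have := IHa (m+1)
            nlinarith [pow_pos ht (m+1), v.nonneg ((mprod s).coeff (m+1))]
      · intro m hm
        rw [hq] at hm
        match m with
        | 0 =>
          rw [coeff_mprod_cons_zero, hM]
          simp only [pow_zero, mul_one]
          rw [v.map_mul, v.map_neg]
          have h0 := IHb 0 hm
          simp only [pow_zero, mul_one] at h0
          nlinarith
        | m+1 =>
          have hm' : m < qLt v t s := by omega
          rw [coeff_mprod_cons_succ, hM]
          refine lt_of_le_of_lt (vsub_mul_le hna _ _ (by positivity)) (max_lt ?_ ?_)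
          · rw [pow_succ, ← mul_assoc]
            calc v ((mprod s).coeff m) * t ^ m * t < MLt v t s * t :=
                  mul_lt_mul_of_pos_right (IHb m hm') ht
              _ ≤ v a * MLt v t s := by nlinarith [MLt_pos (v := v) ht s]
          · rw [v.map_mul]
            have hb := IHb (m+1) hm
            nlinarith [pow_pos ht (m+1), v.nonneg ((mprod s).coeff (m+1))]
      · rw [hq, hM]
        match hqs : qLt v t s with
        | 0 =>
          rw [coeff_mprod_cons_zero]
          simp only [pow_zero, mul_one]
          rw [v.map_mul, v.map_neg]
          have := IHc
          rw [hqs] at this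
          simp only [pow_zero, mul_one] at this
          rw [this]
        | m+1 =>
          rw [coeff_mprod_cons_succ]
          have hc := IHc
          rw [hqs, Nat.succ_eq_add_one] at hc
          have hpos : 0 ≤ v ((mprod s).coeff (m+1)) := v.nonneg _
          have hb := IHb m (by omega)
          have hdom : v ((mprod s).coeff m) < v (a * (mprod s).coeff (m + 1)) := by
            rw [v.map_mul]
            have h1 : v ((mprod s).coeff m) * t ^ m <
                (v ((mprod s).coeff (m+1)) * t) * t ^ m := by
              rw [mul_assoc, mul_comm t (t^m), ← pow_succ]
              exact hb.trans_eq hc.symm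
            have h2 := lt_of_mul_lt_mul_right h1 (pow_pos ht m).le
            nlinarith
          rw [vsub_dom' hna hdom, v.map_mul, mul_assoc, hc]

end Master

section Balls
variable {K : Type*} [Field K] (v : AbsoluteValue K ℝ)

/-- closed (`op = false`) or open (`op = true`) ball -/
def vB (c : K) (t : ℝ) (op : Bool) : Set K :=
  {z : K | cond op (v (z - c) < t) (v (z - c) ≤ t)}

variable {v}

lemma mem_vB_false {c z : K} {t : ℝ} : z ∈ vB v c t false ↔ v (z - c) ≤ t := Iff.rfl
lemma mem_vB_true {c z : K} {t : ℝ} : z ∈ vB v c t true ↔ v (z - c) < t := Iff.rfl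

lemma self_mem_vB {c : K} {t : ℝ} (ht : 0 < t) (op : Bool) : c ∈ vB v c t op := by
  cases op <;> simp [vB, ht, ht.le]

lemma isDisk_vB {c : K} {t : ℝ} (ht : 0 < t) (op : Bool) : IsDisk v (vB v c t op) := by
  refine ⟨c, t, ht, ?_⟩
  cases op
  · right; rfl
  · left; rfl

lemma vB_recenter (hna : IsNonarchimedean ⇑v) {c x : K} {t : ℝ} (op : Bool)
    (hx : x ∈ vB v c t op) : vB v c t op = vB v x t op := by
  ext z
  cases op with
  | false =>
    simp only [mem_vB_false] at hx ⊢
    constructor <;> intro hz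
    · exact le_trans (by simpa [sub_sub_sub_cancel_right] using vsub_le hna (z - c) (x - c))
        (max_le hz hx)
    · exact le_trans (by simpa [sub_add_sub_cancel] using hna (z - x) (x - c)) (max_le hz hx)
  | true =>
    simp only [mem_vB_true] at hx ⊢
    constructor <;> intro hz
    · exact lt_of_le_of_lt (by simpa [sub_sub_sub_cancel_right] using vsub_le hna (z - c) (x - c))
        (max_lt hz hx)
    · exact lt_of_le_of_lt (by simpa [sub_add_sub_cancel] using hna (z - x) (x - c))
        (max_lt hz hx)

lemma vB_mono {c : K} {t t' : ℝ} (op : Bool) (h : t ≤ t') : vB v c t op ⊆ vB v c t' op := by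
  intro z hz
  cases op
  · exact le_trans hz h
  · exact lt_of_lt_of_le hz h

lemma vB_true_subset_false {c : K} {t : ℝ} : vB v c t true ⊆ vB v c t false := by
  intro z hz
  exact le_of_lt (mem_vB_true.1 hz)

end Balls

section Poly
variable {K : Type*} [Field K] [IsAlgClosed K] {v : AbsoluteValue K ℝ}

lemma prod_max_split_le {t : ℝ} (ht : 0 < t) (s : Multiset K) :
    (s.map (fun w => max t (v w))).prod = MLe v t s := by
  induction s using Multiset.induction_on with
  | empty => simp [MLe, PiLe, qLe]
  | cons a s IH =>
    rw [Multiset.map_cons, Multiset.prod_cons, IH]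
    by_cases ha : v a ≤ t
    · have hq : qLe v t (a ::ₘ s) = qLe v t s + 1 := by
        simp only [qLe, Multiset.filter_cons_of_pos (p := fun z => v z ≤ t) _ ha,
          Multiset.card_cons]
      have hPi : PiLe v t (a ::ₘ s) = PiLe v t s := by
        simp only [PiLe, Multiset.filter_cons_of_neg (p := fun z => t < v z) _ (not_lt.2 ha)]
      rw [MLe, MLe, hq, hPi, max_eq_left ha, pow_succ]; ring
    · push_neg at ha
      have hq : qLe v t (a ::ₘ s) = qLe v t s := by
        simp only [qLe, Multiset.filter_cons_of_neg (p := fun z => v z ≤ t) _ (not_le.2 ha)]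
      have hPi : PiLe v t (a ::ₘ s) = v a * PiLe v t s := by
        simp only [PiLe, Multiset.filter_cons_of_pos (p := fun z => t < v z) _ ha,
          Multiset.map_cons, Multiset.prod_cons]
      rw [MLe, MLe, hq, hPi, max_eq_right ha.le]; ring

lemma prod_max_split_lt {t : ℝ} (ht : 0 < t) (s : Multiset K) :
    (s.map (fun w => max t (v w))).prod = MLt v t s := by
  induction s using Multiset.induction_on with
  | empty => simp [MLt, PiLt, qLt]
  | cons a s IH =>
    rw [Multiset.map_cons, Multiset.prod_cons, IH]
    by_cases ha : v a < t
    · have hq : qLt v t (a ::ₘ s) = qLt v t s + 1 := by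
        simp only [qLt, Multiset.filter_cons_of_pos (p := fun z => v z < t) _ ha,
          Multiset.card_cons]
      have hPi : PiLt v t (a ::ₘ s) = PiLt v t s := by
        simp only [PiLt, Multiset.filter_cons_of_neg (p := fun z => t ≤ v z) _ (not_le.2 ha)]
      rw [MLt, MLt, hq, hPi, max_eq_left ha.le, pow_succ]; ring
    · push_neg at ha
      have hq : qLt v t (a ::ₘ s) = qLt v t s := by
        simp only [qLt, Multiset.filter_cons_of_neg (p := fun z => v z < t) _ (not_lt.2 ha)]
      have hPi : PiLt v t (a ::ₘ s) = v a * PiLt v t s := by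
        simp only [PiLt, Multiset.filter_cons_of_pos (p := fun z => t ≤ v z) _ ha,
          Multiset.map_cons, Multiset.prod_cons]
      rw [MLt, MLt, hq, hPi, max_eq_right ha]; ring

lemma MLe_eq_MLt {t : ℝ} (ht : 0 < t) (s : Multiset K) : MLe v t s = MLt v t s := by
  rw [← prod_max_split_le ht, ← prod_max_split_lt ht]

/-- pointwise product inequality over a multiset -/
lemma mprod_map_le (s : Multiset K) (F G : K → ℝ) (h1 : ∀ a ∈ s, 0 ≤ F a)
    (h2 : ∀ a ∈ s, F a ≤ G a) : (s.map F).prod ≤ (s.map G).prod := by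
  induction s using Multiset.induction_on with
  | empty => simp
  | cons a s IH =>
    rw [Multiset.map_cons, Multiset.prod_cons, Multiset.map_cons, Multiset.prod_cons]
    have hF : 0 ≤ (s.map F).prod := by
      refine Multiset.prod_nonneg ?_
      intro x hx
      rcases Multiset.mem_map.1 hx with ⟨z, hz, rfl⟩
      exact h1 z (Multiset.mem_cons_of_mem hz)
    have := IH (fun a ha => h1 a (Multiset.mem_cons_of_mem ha))
      (fun a ha => h2 a (Multiset.mem_cons_of_mem ha))
    have hFa := h1 a (Multiset.mem_cons_self a s)
    have hGa := h2 a (Multiset.mem_cons_self a s)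
    nlinarith

/-- a nonzero polynomial over an algebraically closed field is its leading coefficient
times the product of `X - root`. -/
lemma eq_C_mul_mprod (p : K[X]) : p = C p.leadingCoeff * mprod p.roots := by
  have := (C_leadingCoeff_mul_prod_multiset_X_sub_C (splits_iff_card_roots.1 (IsAlgClosed.splits p))).symm
  simpa [mprod] using this

lemma eval_abs (p : K[X]) (z : K) :
    v (p.eval z) = v p.leadingCoeff * ((p.roots.map (fun d => v (z - d))).prod) := by
  conv_lhs => rw [eq_C_mul_mprod p]
  rw [eval_mul, eval_C, v.map_mul, mprod, eval_multiset_prod, Multiset.map_map]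
  rw [map_multiset_prod (v : AbsoluteValue K ℝ), Multiset.map_map]
  congr 2
  ext d
  simp

lemma comp_linear (p : K[X]) (x : K) :
    p.comp (X + C x) = C p.leadingCoeff * mprod (p.roots.map (fun z => z - x)) := by
  conv_lhs => rw [eq_C_mul_mprod p]
  rw [mul_comp, C_comp, mprod, mprod, multiset_prod_comp, Multiset.map_map, Multiset.map_map]
  congr 1
  refine congrArg Multiset.prod (Multiset.map_congr rfl ?_)
  intro d hd
  simp only [Function.comp_apply, sub_comp, X_comp, C_comp]
  rw [map_sub]
  ring

end Poly

section Analytic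
variable {K : Type*} [Field K] [IsAlgClosed K] {v : AbsoluteValue K ℝ}

/-- number of roots of `p` in a ball, with multiplicity -/
noncomputable def cnt (v : AbsoluteValue K ℝ) (p : K[X]) (x : K) (t : ℝ) (op : Bool) : ℕ :=
  (p.roots.filter (fun z => z ∈ vB v x t op)).card

/-- radius growth function -/
noncomputable def Rad (v : AbsoluteValue K ℝ) (p : K[X]) (x : K) (t : ℝ) : ℝ :=
  v p.leadingCoeff * ((p.roots.map (fun d => max t (v (d - x)))).prod)

lemma cnt_false_eq (p : K[X]) (x : K) (t : ℝ) :
    cnt v p x t false = qLe v t (p.roots.map (fun z => z - x)) := by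
  rw [cnt, qLe, Multiset.filter_map, Multiset.card_map]
  rfl

lemma cnt_true_eq (p : K[X]) (x : K) (t : ℝ) :
    cnt v p x t true = qLt v t (p.roots.map (fun z => z - x)) := by
  rw [cnt, qLt, Multiset.filter_map, Multiset.card_map]
  rfl

lemma Rad_eq_le {t : ℝ} (ht : 0 < t) (p : K[X]) (x : K) :
    Rad v p x t = v p.leadingCoeff * MLe v t (p.roots.map (fun z => z - x)) := by
  rw [Rad, ← prod_max_split_le ht, Multiset.map_map]
  rfl

lemma Rad_eq_lt {t : ℝ} (ht : 0 < t) (p : K[X]) (x : K) :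
    Rad v p x t = v p.leadingCoeff * MLt v t (p.roots.map (fun z => z - x)) := by
  rw [Rad_eq_le ht, MLe_eq_MLt ht]

lemma Rad_pos {t : ℝ} (ht : 0 < t) {p : K[X]} (hp : p ≠ 0) (x : K) :
    0 < Rad v p x t := by
  rw [Rad_eq_le ht]
  exact mul_pos (v.pos (leadingCoeff_ne_zero.2 hp)) (MLe_pos ht _)

lemma coeff_comp_linear (p : K[X]) (x : K) (m : ℕ) :
    (p.comp (X + C x)).coeff m
      = p.leadingCoeff * (mprod (p.roots.map (fun z => z - x))).coeff m := by
  rw [comp_linear, coeff_C_mul]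

lemma coeff_zero_comp (p : K[X]) (x : K) : (p.comp (X + C x)).coeff 0 = p.eval x := by
  rw [coeff_zero_eq_eval_zero, eval_comp]
  simp

lemma sup_false (hna : IsNonarchimedean ⇑v) (p : K[X]) (x z : K) {t : ℝ}
    (h : v (z - x) ≤ t) : v (p.eval z) ≤ Rad v p x t := by
  rw [eval_abs, Rad]
  refine mul_le_mul_of_nonneg_left ?_ (v.nonneg _)
  refine mprod_map_le _ _ _ (fun d _ => v.nonneg _) ?_
  intro d _
  have : v (z - d) ≤ max (v (z - x)) (v (d - x)) := by
    have := vsub_le hna (z - x) (d - x)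
    rwa [sub_sub_sub_cancel_right] at this
  refine this.trans (max_le_max h (le_refl _))

lemma sup_true (hna : IsNonarchimedean ⇑v) {p : K[X]} {x : K} (hx : x ∈ p.roots)
    (z : K) {t : ℝ} (ht : 0 < t) (h : v (z - x) < t) : v (p.eval z) < Rad v p x t := by
  have hp : p ≠ 0 := by
    intro h0
    rw [h0, roots_zero] at hx
    exact absurd hx (Multiset.notMem_zero x)
  have hc : 0 < v p.leadingCoeff := v.pos (leadingCoeff_ne_zero.2 hp)
  rw [eval_abs, Rad]
  refine mul_lt_mul_of_pos_left ?_ hc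
  have hsplit := Multiset.cons_erase hx
  rw [← hsplit, Multiset.map_cons, Multiset.prod_cons, Multiset.map_cons, Multiset.prod_cons]
  have hB : 0 < ((p.roots.erase x).map (fun d => max t (v (d - x)))).prod := by
    refine Multiset.prod_pos ?_
    intro u hu
    rcases Multiset.mem_map.1 hu with ⟨d, hd, rfl⟩
    exact lt_of_lt_of_le ht (le_max_left _ _)
  have hAB : ((p.roots.erase x).map (fun d => v (z - d))).prod ≤
      ((p.roots.erase x).map (fun d => max t (v (d - x)))).prod := by
    refine mprod_map_le _ _ _ (fun d _ => v.nonneg _) ?_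
    intro d _
    have h1 : v (z - d) ≤ max (v (z - x)) (v (d - x)) := by
      have := vsub_le hna (z - x) (d - x)
      rwa [sub_sub_sub_cancel_right] at this
    exact h1.trans (max_le_max h.le (le_refl _))
  have hxx : max t (v (x - x)) = t := by simp [ht.le]
  rw [hxx]
  calc v (z - x) * ((p.roots.erase x).map (fun d => v (z - d))).prod
      ≤ v (z - x) * ((p.roots.erase x).map (fun d => max t (v (d - x)))).prod :=
        mul_le_mul_of_nonneg_left hAB (v.nonneg _)
    _ < t * ((p.roots.erase x).map (fun d => max t (v (d - x)))).prod :=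
        mul_lt_mul_of_pos_right h hB

lemma card_roots_eq (p : K[X]) : p.roots.card = p.natDegree :=
  splits_iff_card_roots.1 (IsAlgClosed.splits p)

lemma surj_false (hna : IsNonarchimedean ⇑v) {p : K[X]} (hdeg : 1 ≤ p.natDegree)
    {x : K} (hx : x ∈ p.roots) {t : ℝ} (ht : 0 < t) {w : K}
    (hw : v w ≤ Rad v p x t) : ∃ z, v (z - x) ≤ t ∧ p.eval z = w := by
  by_contra hcon
  push_neg at hcon
  have hp : p ≠ 0 := fun h => by simp [h] at hdeg
  have hc : 0 < v p.leadingCoeff := v.pos (leadingCoeff_ne_zero.2 hp)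
  set c := p.leadingCoeff with hcdef
  set P := p - C w with hPdef
  have hPdeg : P.natDegree = p.natDegree := natDegree_sub_C
  have hP : P ≠ 0 := by
    intro h
    rw [h, natDegree_zero] at hPdeg
    omega
  have hlcP : P.leadingCoeff = c := by
    rw [leadingCoeff, hPdeg, hPdef, coeff_sub, coeff_C, if_neg (by omega), sub_zero, hcdef,
      leadingCoeff]
  set sh := p.roots.map (fun z => z - x) with hshdef
  set shP := P.roots.map (fun z => z - x) with hshPdef
  have hq0 : 1 ≤ qLe v t sh := by
    rw [qLe]
    refine Multiset.card_pos_iff_exists_mem.2 ?_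
    refine ⟨0, Multiset.mem_filter.2 ⟨?_, by simpa using ht.le⟩⟩
    exact Multiset.mem_map.2 ⟨x, hx, sub_self x⟩
  have hq' : qLe v t shP = 0 := by
    rw [qLe, Multiset.card_eq_zero, Multiset.filter_eq_nil]
    intro u hu hle
    rcases Multiset.mem_map.1 hu with ⟨z, hz, rfl⟩
    refine hcon z hle ?_
    have h0 : P.eval z = 0 := (isRoot_of_mem_roots hz)
    rw [hPdef] at h0
    simp only [eval_sub, eval_C] at h0
    exact sub_eq_zero.1 h0
  have hcompP : P.comp (X + C x) = p.comp (X + C x) - C w := by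
    rw [hPdef, sub_comp, C_comp]
  have hAB : ∀ m, 1 ≤ m → (P.comp (X + C x)).coeff m = (p.comp (X + C x)).coeff m := by
    intro m hm
    rw [hcompP, coeff_sub, coeff_C, if_neg (by omega), sub_zero]
  have hB0 : (P.comp (X + C x)).coeff 0 = -w := by
    rw [hcompP, coeff_sub, coeff_C, if_pos rfl, coeff_zero_comp]
    rw [(isRoot_of_mem_roots hx : p.eval x = 0)]
    ring
  obtain ⟨maP, mbP, mcP⟩ := master_le (v := v) hna ht shP
  obtain ⟨ma, mb, mc⟩ := master_le (v := v) hna ht sh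
  set q0 := qLe v t sh with hq0def
  -- v w = v c * MLe shP
  have hw_eq : v w = v c * MLe v t shP := by
    have hmc := mcP
    rw [hq'] at hmc
    simp only [pow_zero, mul_one] at hmc
    have h1 := coeff_comp_linear P x 0
    rw [hB0, hlcP] at h1
    have h2 : v w = v c * v ((mprod shP).coeff 0) := by
      have := congrArg v h1
      rwa [v.map_neg, v.map_mul] at this
    rw [h2, hmc]
  -- strict bound at q0 for shP
  have hstrict : v ((mprod shP).coeff q0) * t ^ q0 < MLe v t shP := by
    apply mbP
    omega
  -- equality at q0 for sh
  have heq : v ((mprod sh).coeff q0) * t ^ q0 = MLe v t sh := mc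
  -- same coefficient
  have hsame : v ((mprod shP).coeff q0) = v ((mprod sh).coeff q0) := by
    have h1 := coeff_comp_linear P x q0
    have h2 := coeff_comp_linear p x q0
    rw [hlcP] at h1
    have h3 := hAB q0 hq0
    rw [h1, h2] at h3
    have hcne : c ≠ 0 := leadingCoeff_ne_zero.2 hp
    have := mul_left_cancel₀ hcne h3
    rw [this]
  have hrad : Rad v p x t = v c * MLe v t sh := Rad_eq_le ht p x
  -- contradiction
  have hfinal : Rad v p x t < v w := by
    rw [hw_eq, hrad]
    calc v c * MLe v t sh = v c * (v ((mprod sh).coeff q0) * t ^ q0) := by rw [heq]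
      _ = v c * (v ((mprod shP).coeff q0) * t ^ q0) := by rw [hsame]
      _ < v c * MLe v t shP := by
          refine mul_lt_mul_of_pos_left hstrict hc
  linarith
end Analytic

section Analytic2
variable {K : Type*} [Field K] [IsAlgClosed K] {v : AbsoluteValue K ℝ}

lemma Rad_scale {t t' : ℝ} (ht' : 0 < t') (htt : t' ≤ t) (p : K[X]) (x : K) :
    (t'/t)^(p.roots.card) * Rad v p x t ≤ Rad v p x t' := by
  have ht : 0 < t := lt_of_lt_of_le ht' htt
  have hk0 : 0 < t'/t := div_pos ht' ht
  have hk1 : t'/t ≤ 1 := (div_le_one ht).2 htt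
  rw [Rad, Rad, ← mul_assoc, mul_comm ((t'/t)^(p.roots.card)) (v p.leadingCoeff), mul_assoc]
  refine mul_le_mul_of_nonneg_left ?_ (v.nonneg _)
  have hconst : (t'/t)^(p.roots.card) = (p.roots.map (fun _ => t'/t)).prod := by
    rw [Multiset.map_const', Multiset.prod_replicate]
  rw [hconst, ← Multiset.prod_map_mul]
  refine mprod_map_le _ _ _ ?_ ?_
  · intro d _
    positivity
  · intro d _
    have h1 : t'/t * max t (v (d - x)) = max t' ((t'/t) * v (d - x)) := by
      rw [mul_max_of_nonneg _ _ hk0.le]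
      congr 1
      field_simp
    rw [h1]
    refine max_le (le_max_left _ _) ?_
    refine le_max_of_le_right ?_
    nlinarith [v.nonneg (d - x)]

lemma surj_true (hna : IsNonarchimedean ⇑v) {p : K[X]} (hdeg : 1 ≤ p.natDegree)
    {x : K} (hx : x ∈ p.roots) {t : ℝ} (ht : 0 < t) {w : K}
    (hw : v w < Rad v p x t) : ∃ z, v (z - x) < t ∧ p.eval z = w := by
  have hp : p ≠ 0 := fun h => by simp [h] at hdeg
  by_cases hw0 : w = 0
  · exact ⟨x, by simpa using ht, by rw [hw0]; exact isRoot_of_mem_roots hx⟩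
  have hwpos : 0 < v w := v.pos hw0
  have hRpos : 0 < Rad v p x t := Rad_pos ht hp x
  set n := p.roots.card with hndef
  have hn1 : 1 ≤ n := by
    rw [hndef, card_roots_eq]; exact hdeg
  set lam := (v w / Rad v p x t) ^ ((n:ℝ)⁻¹) with hlamdef
  have hfrac0 : 0 < v w / Rad v p x t := div_pos hwpos hRpos
  have hfrac1 : v w / Rad v p x t < 1 := (div_lt_one hRpos).2 hw
  have hlam0 : 0 < lam := Real.rpow_pos_of_pos hfrac0 _
  have hlam1 : lam < 1 := by
    refine Real.rpow_lt_one hfrac0.le hfrac1 ?_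
    positivity
  set t' := lam * t with ht'def
  have ht'0 : 0 < t' := mul_pos hlam0 ht
  have ht't : t' < t := by nlinarith
  have hlampow : lam ^ n = v w / Rad v p x t := by
    rw [hlamdef, ← Real.rpow_natCast ((v w / Rad v p x t) ^ ((n:ℝ)⁻¹)) n,
      ← Real.rpow_mul hfrac0.le]
    rw [inv_mul_cancel₀ (by positivity : (n:ℝ) ≠ 0)]
    simp
  have hscale := Rad_scale (v := v) ht'0 ht't.le p x
  have ht'div : t'/t = lam := by
    rw [ht'def]; field_simp
  rw [ht'div, ← hndef, hlampow] at hscale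
  have hwR : v w ≤ Rad v p x t' := by
    rw [div_mul_eq_mul_div, mul_comm] at hscale
    calc v w = Rad v p x t * (v w) / Rad v p x t := by field_simp
      _ ≤ Rad v p x t' := hscale
  obtain ⟨z, hz1, hz2⟩ := surj_false hna hdeg hx ht'0 hwR
  exact ⟨z, lt_of_le_of_lt hz1 ht't, hz2⟩

lemma cnt_sub_false (hna : IsNonarchimedean ⇑v) {p : K[X]} (hdeg : 1 ≤ p.natDegree)
    {x : K} (hx : x ∈ p.roots) {t : ℝ} (ht : 0 < t) {w : K}
    (hw : v w ≤ Rad v p x t) : cnt v (p - C w) x t false = cnt v p x t false := by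
  have hp : p ≠ 0 := fun h => by simp [h] at hdeg
  have hc : 0 < v p.leadingCoeff := v.pos (leadingCoeff_ne_zero.2 hp)
  set c := p.leadingCoeff with hcdef
  set P := p - C w with hPdef
  have hPdeg : P.natDegree = p.natDegree := natDegree_sub_C
  have hP : P ≠ 0 := by
    intro h
    rw [h, natDegree_zero] at hPdeg
    omega
  have hlcP : P.leadingCoeff = c := by
    rw [leadingCoeff, hPdeg, hPdef, coeff_sub, coeff_C, if_neg (by omega), sub_zero, hcdef,
      leadingCoeff]
  set sh := p.roots.map (fun z => z - x) with hshdef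
  set shP := P.roots.map (fun z => z - x) with hshPdef
  have hq0 : 1 ≤ qLe v t sh := by
    rw [qLe]
    refine Multiset.card_pos_iff_exists_mem.2 ?_
    refine ⟨0, Multiset.mem_filter.2 ⟨?_, by simpa using ht.le⟩⟩
    exact Multiset.mem_map.2 ⟨x, hx, sub_self x⟩
  have hcompP : P.comp (X + C x) = p.comp (X + C x) - C w := by
    rw [hPdef, sub_comp, C_comp]
  have hAB : ∀ m, 1 ≤ m → (P.comp (X + C x)).coeff m = (p.comp (X + C x)).coeff m := by
    intro m hm
    rw [hcompP, coeff_sub, coeff_C, if_neg (by omega), sub_zero]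
  have hB0 : (P.comp (X + C x)).coeff 0 = -w := by
    rw [hcompP, coeff_sub, coeff_C, if_pos rfl, coeff_zero_comp]
    rw [(isRoot_of_mem_roots hx : p.eval x = 0)]
    ring
  have hsame : ∀ m, 1 ≤ m → v ((mprod shP).coeff m) = v ((mprod sh).coeff m) := by
    intro m hm
    have h1 := coeff_comp_linear P x m
    have h2 := coeff_comp_linear p x m
    rw [hlcP] at h1
    have h3 := hAB m hm
    rw [h1, h2] at h3
    have hcne : c ≠ 0 := leadingCoeff_ne_zero.2 hp
    rw [mul_left_cancel₀ hcne h3]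
  have hB0v : v c * v ((mprod shP).coeff 0) = v w := by
    have h1 := coeff_comp_linear P x 0
    rw [hB0, hlcP] at h1
    have := congrArg v h1
    rw [v.map_neg, v.map_mul] at this
    linarith
  obtain ⟨maP, mbP, mcP⟩ := master_le (v := v) hna ht shP
  obtain ⟨ma, mb, mc⟩ := master_le (v := v) hna ht sh
  have hrad : Rad v p x t = v c * MLe v t sh := Rad_eq_le ht p x
  rw [cnt_false_eq, cnt_false_eq, ← hshPdef, ← hshdef]
  set d' := qLe v t shP with hd'def
  set q0 := qLe v t sh with hq0def
  rcases lt_trichotomy d' q0 with hlt | heq | hgt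
  · exfalso
    have key2 : v c * (v ((mprod shP).coeff d') * t ^ d') ≤ v c * MLe v t sh := by
      match hdd : d', hlt with
      | 0, _ =>
        simp only [pow_zero, mul_one]
        rw [hB0v]
        rw [hrad] at hw
        exact hw
      | (m+1), hlt' =>
        rw [hsame (m+1) (by omega)]
        exact mul_le_mul_of_nonneg_left (ma (m+1)) hc.le
    have key1 : v ((mprod shP).coeff d') * t ^ d' = MLe v t shP := mcP
    have key3 : v ((mprod shP).coeff q0) * t ^ q0 < MLe v t shP := mbP q0 hlt
    have key4 : v ((mprod shP).coeff q0) = v ((mprod sh).coeff q0) := hsame q0 hq0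
    have key5 : v ((mprod sh).coeff q0) * t ^ q0 = MLe v t sh := mc
    rw [key1] at key2
    rw [key4, key5] at key3
    nlinarith
  · rw [heq]
  · exfalso
    have h1 : v ((mprod shP).coeff d') * t ^ d' = MLe v t shP := mcP
    have h2 : v ((mprod shP).coeff d') = v ((mprod sh).coeff d') := hsame d' (by omega)
    have h3 : v ((mprod sh).coeff d') * t ^ d' < MLe v t sh := mb d' hgt
    have h4 : v ((mprod shP).coeff q0) * t ^ q0 ≤ MLe v t shP := maP q0
    have h5 : v ((mprod shP).coeff q0) = v ((mprod sh).coeff q0) := hsame q0 hq0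
    have h6 : v ((mprod sh).coeff q0) * t ^ q0 = MLe v t sh := mc
    rw [h2] at h1
    rw [h5, h6] at h4
    nlinarith

lemma cnt_sub_true (hna : IsNonarchimedean ⇑v) {p : K[X]} (hdeg : 1 ≤ p.natDegree)
    {x : K} (hx : x ∈ p.roots) {t : ℝ} (ht : 0 < t) {w : K}
    (hw : v w < Rad v p x t) : cnt v (p - C w) x t true = cnt v p x t true := by
  have hp : p ≠ 0 := fun h => by simp [h] at hdeg
  have hc : 0 < v p.leadingCoeff := v.pos (leadingCoeff_ne_zero.2 hp)
  set c := p.leadingCoeff with hcdef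
  set P := p - C w with hPdef
  have hPdeg : P.natDegree = p.natDegree := natDegree_sub_C
  have hP : P ≠ 0 := by
    intro h
    rw [h, natDegree_zero] at hPdeg
    omega
  have hlcP : P.leadingCoeff = c := by
    rw [leadingCoeff, hPdeg, hPdef, coeff_sub, coeff_C, if_neg (by omega), sub_zero, hcdef,
      leadingCoeff]
  set sh := p.roots.map (fun z => z - x) with hshdef
  set shP := P.roots.map (fun z => z - x) with hshPdef
  have hq0 : 1 ≤ qLt v t sh := by
    rw [qLt]
    refine Multiset.card_pos_iff_exists_mem.2 ?_
    refine ⟨0, Multiset.mem_filter.2 ⟨?_, by simpa using ht⟩⟩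
    exact Multiset.mem_map.2 ⟨x, hx, sub_self x⟩
  have hcompP : P.comp (X + C x) = p.comp (X + C x) - C w := by
    rw [hPdef, sub_comp, C_comp]
  have hAB : ∀ m, 1 ≤ m → (P.comp (X + C x)).coeff m = (p.comp (X + C x)).coeff m := by
    intro m hm
    rw [hcompP, coeff_sub, coeff_C, if_neg (by omega), sub_zero]
  have hB0 : (P.comp (X + C x)).coeff 0 = -w := by
    rw [hcompP, coeff_sub, coeff_C, if_pos rfl, coeff_zero_comp]
    rw [(isRoot_of_mem_roots hx : p.eval x = 0)]
    ring
  have hsame : ∀ m, 1 ≤ m → v ((mprod shP).coeff m) = v ((mprod sh).coeff m) := by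
    intro m hm
    have h1 := coeff_comp_linear P x m
    have h2 := coeff_comp_linear p x m
    rw [hlcP] at h1
    have h3 := hAB m hm
    rw [h1, h2] at h3
    have hcne : c ≠ 0 := leadingCoeff_ne_zero.2 hp
    rw [mul_left_cancel₀ hcne h3]
  have hB0v : v c * v ((mprod shP).coeff 0) = v w := by
    have h1 := coeff_comp_linear P x 0
    rw [hB0, hlcP] at h1
    have := congrArg v h1
    rw [v.map_neg, v.map_mul] at this
    linarith
  obtain ⟨maP, mbP, mcP⟩ := master_lt (v := v) hna ht shP
  obtain ⟨ma, mb, mc⟩ := master_lt (v := v) hna ht sh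
  have hrad : Rad v p x t = v c * MLt v t sh := Rad_eq_lt ht p x
  rw [cnt_true_eq, cnt_true_eq, ← hshPdef, ← hshdef]
  set d' := qLt v t shP with hd'def
  set q0 := qLt v t sh with hq0def
  rcases lt_trichotomy d' q0 with hlt | heq | hgt
  · exfalso
    -- vc * MLt shP < vc * MLt sh
    have key2 : v c * (v ((mprod shP).coeff d') * t ^ d') < v c * MLt v t sh := by
      match hdd : d', hlt with
      | 0, _ =>
        simp only [pow_zero, mul_one]
        rw [hB0v]
        rw [hrad] at hw
        exact hw
      | (m+1), hlt' =>
        rw [hsame (m+1) (by omega)]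
        exact mul_lt_mul_of_pos_left (mb (m+1) hlt') hc
    have key1 : v ((mprod shP).coeff d') * t ^ d' = MLt v t shP := mcP
    have h4 : v ((mprod shP).coeff q0) * t ^ q0 ≤ MLt v t shP := maP q0
    have h5 : v ((mprod shP).coeff q0) = v ((mprod sh).coeff q0) := hsame q0 hq0
    have h6 : v ((mprod sh).coeff q0) * t ^ q0 = MLt v t sh := mc
    rw [key1] at key2
    rw [h5, h6] at h4
    nlinarith
  · rw [heq]
  · exfalso
    have h1 : v ((mprod shP).coeff d') * t ^ d' = MLt v t shP := mcP
    have h2 : v ((mprod shP).coeff d') = v ((mprod sh).coeff d') := hsame d' (by omega)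
    have h3 : v ((mprod sh).coeff d') * t ^ d' ≤ MLt v t sh := ma d'
    have h4 : v ((mprod shP).coeff q0) * t ^ q0 < MLt v t shP := mbP q0 hgt
    have h5 : v ((mprod shP).coeff q0) = v ((mprod sh).coeff q0) := hsame q0 hq0
    have h6 : v ((mprod sh).coeff q0) * t ^ q0 = MLt v t sh := mc
    rw [h2] at h1
    rw [h5, h6] at h4
    nlinarith

end Analytic2

section RH
variable {K : Type*} [Field K] [IsAlgClosed K] {v : AbsoluteValue K ℝ}

lemma v_nat_le_one (hna : IsNonarchimedean ⇑v) (n : ℕ) : v (n : K) ≤ 1 := by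
  induction n with
  | zero => simp
  | succ n IH =>
    have h : ((n+1 : ℕ) : K) = (n : K) + 1 := by push_cast; ring
    rw [h]
    refine le_trans (hna _ _) (max_le IH (by simp))

lemma deriv_comp_linear (p : K[X]) (x : K) :
    (p.comp (X + C x)).derivative = (p.derivative).comp (X + C x) := by
  rw [Polynomial.derivative_comp]
  simp

/-- local Riemann–Hurwitz lower bound -/
lemma RH_local (hna : IsNonarchimedean ⇑v) {p : K[X]} (hdeg : 1 ≤ p.natDegree)
    (x : K) {t : ℝ} (ht : 0 < t) {e : ℕ} (op : Bool)
    (hd1 : 1 ≤ cnt v p x t op) (hde : cnt v p x t op ≤ e)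
    (hres : ∀ n : ℕ, 1 ≤ n → n ≤ e → v (n : K) = 1) :
    cnt v p x t op - 1 ≤ cnt v p.derivative x t op := by
  have hp : p ≠ 0 := fun h => by simp [h] at hdeg
  have hc : 0 < v p.leadingCoeff := v.pos (leadingCoeff_ne_zero.2 hp)
  set c := p.leadingCoeff with hcdef
  set sh := p.roots.map (fun z => z - x) with hshdef
  set shD := p.derivative.roots.map (fun z => z - x) with hshDdef
  set cD := p.derivative.leadingCoeff with hcDdef
  set d := cnt v p x t op with hddef
  have hvd : v ((d : ℕ) : K) = 1 := hres d hd1 hde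
  have hcast : ((d - 1 : ℕ) : K) + 1 = ((d : ℕ) : K) := by
    have h1 : (d - 1 : ℕ) + 1 = d := by omega
    calc ((d-1:ℕ):K) + 1 = (((d-1)+1 : ℕ) : K) := by push_cast; ring
      _ = _ := by rw [h1]
  set A := p.comp (X + C x) with hAdef
  set B := p.derivative.comp (X + C x) with hBdef
  have hBA : ∀ m : ℕ, B.coeff m = A.coeff (m+1) * (((m : ℕ) : K) + 1) := by
    intro m
    rw [hBdef, ← deriv_comp_linear, Polynomial.coeff_derivative]
  have lA : ∀ m, v (A.coeff m) = v c * v ((mprod sh).coeff m) := by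
    intro m
    rw [hAdef, coeff_comp_linear, v.map_mul]
  have lB : ∀ m, v (B.coeff m) = v cD * v ((mprod shD).coeff m) := by
    intro m
    rw [hBdef, coeff_comp_linear, v.map_mul]
  have hBd : v (B.coeff (d-1)) = v (A.coeff d) := by
    rw [hBA (d-1), v.map_mul, hcast, hvd, mul_one]
    congr 2
    omega
  have hBle : ∀ m : ℕ, v (B.coeff m) ≤ v (A.coeff (m+1)) := by
    intro m
    rw [hBA m, v.map_mul]
    have h1 : ((m : ℕ) : K) + 1 = ((m+1 : ℕ) : K) := by push_cast; ring
    rw [h1]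
    nlinarith [v_nat_le_one hna (m+1), v.nonneg (A.coeff (m+1)), v.nonneg (((m+1:ℕ) : K))]
  by_contra hcon
  push_neg at hcon
  set q' := cnt v p.derivative x t op with hq'def
  cases op with
  | false =>
    obtain ⟨ma, mb, mc⟩ := master_le (v := v) hna ht sh
    obtain ⟨maD, mbD, mcD⟩ := master_le (v := v) hna ht shD
    have hq0 : qLe v t sh = d := (cnt_false_eq p x t).symm
    have hqD : qLe v t shD = q' := (cnt_false_eq p.derivative x t).symm
    set M := v c * MLe v t sh with hMdef
    have hMpos : 0 < M := mul_pos hc (MLe_pos ht sh)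
    have key : v (A.coeff d) * t ^ d = M := by
      rw [lA d, mul_assoc]
      rw [hMdef]
      congr 1
      rw [← hq0] at hvd ⊢
      exact mc
    have hApos : 0 < v (A.coeff d) := by
      nlinarith [pow_pos ht d, v.nonneg (A.coeff d)]
    have hD : p.derivative ≠ 0 := by
      intro h0
      have : B = 0 := by rw [hBdef, h0, zero_comp]
      rw [this] at hBd
      simp only [coeff_zero, map_zero] at hBd
      linarith
    have hcD0 : 0 < v cD := v.pos (leadingCoeff_ne_zero.2 hD)
    set M' := v cD * MLe v t shD with hM'def
    have c1 : v (B.coeff (d-1)) * t ^ (d-1) < M' := by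
      rw [lB (d-1), mul_assoc, hM'def]
      refine mul_lt_mul_of_pos_left ?_ hcD0
      refine mbD (d-1) ?_
      omega
    have c2 : v (B.coeff q') * t ^ q' = M' := by
      rw [lB q', mul_assoc, hM'def]
      congr 1
      rw [← hqD] at *
      exact mcD
    have c4 : v (A.coeff (q'+1)) * t ^ (q'+1) ≤ M := by
      rw [lA (q'+1), mul_assoc, hMdef]
      refine mul_le_mul_of_nonneg_left (ma (q'+1)) hc.le
    -- chain
    have e1 : v (A.coeff d) * t ^ (d-1) * t = M := by
      rw [mul_assoc, ← pow_succ]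
      have h2 : (d - 1) + 1 = d := by omega
      rw [h2, key]
    have e2 : v (B.coeff q') * t ^ (q'+1) ≤ M := by
      calc v (B.coeff q') * t ^ (q'+1) ≤ v (A.coeff (q'+1)) * t ^ (q'+1) :=
            mul_le_mul_of_nonneg_right (hBle q') (by positivity)
        _ ≤ M := c4
    have e3 : M' * t ≤ M := by
      rw [← c2, mul_assoc, ← pow_succ]
      exact e2
    rw [hBd] at c1
    nlinarith
  | true =>
    obtain ⟨ma, mb, mc⟩ := master_lt (v := v) hna ht sh
    obtain ⟨maD, mbD, mcD⟩ := master_lt (v := v) hna ht shD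
    have hq0 : qLt v t sh = d := (cnt_true_eq p x t).symm
    have hqD : qLt v t shD = q' := (cnt_true_eq p.derivative x t).symm
    set M := v c * MLt v t sh with hMdef
    have hMpos : 0 < M := mul_pos hc (MLt_pos ht sh)
    have key : v (A.coeff d) * t ^ d = M := by
      rw [lA d, mul_assoc, hMdef]
      congr 1
      rw [← hq0] at hvd ⊢
      exact mc
    have hApos : 0 < v (A.coeff d) := by
      nlinarith [pow_pos ht d, v.nonneg (A.coeff d)]
    have hD : p.derivative ≠ 0 := by
      intro h0
      have : B = 0 := by rw [hBdef, h0, zero_comp]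
      rw [this] at hBd
      simp only [coeff_zero, map_zero] at hBd
      linarith
    have hcD0 : 0 < v cD := v.pos (leadingCoeff_ne_zero.2 hD)
    set M' := v cD * MLt v t shD with hM'def
    have f1 : v (B.coeff q') * t ^ q' = M' := by
      rw [lB q', mul_assoc, hM'def]
      congr 1
      rw [← hqD] at *
      exact mcD
    have f2 : v (A.coeff (q'+1)) * t ^ (q'+1) < M := by
      rw [lA (q'+1), mul_assoc, hMdef]
      refine mul_lt_mul_of_pos_left ?_ hc
      refine mb (q'+1) ?_
      omega
    have f4 : v (B.coeff (d-1)) * t ^ (d-1) ≤ M' := by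
      rw [lB (d-1), mul_assoc, hM'def]
      exact mul_le_mul_of_nonneg_left (maD (d-1)) hcD0.le
    have e1 : v (A.coeff d) * t ^ (d-1) * t = M := by
      rw [mul_assoc, ← pow_succ]
      have h2 : (d - 1) + 1 = d := by omega
      rw [h2, key]
    have e3 : M' * t < M := by
      rw [← f1, mul_assoc, ← pow_succ]
      calc v (B.coeff q') * t ^ (q'+1) ≤ v (A.coeff (q'+1)) * t ^ (q'+1) :=
            mul_le_mul_of_nonneg_right (hBle q') (by positivity)
        _ < M := f2
    rw [hBd] at f4
    nlinarith

/-- global Riemann–Hurwitz upper bound -/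
lemma RH_global (hna : IsNonarchimedean ⇑v) {p : K[X]} (hdeg : 1 ≤ p.natDegree)
    (x : K) {t : ℝ} (ht : 0 < t) {e : ℕ} (op : Bool) (he1 : 1 ≤ e)
    (hcnt : cnt v p x t op = e)
    (hres : ∀ n : ℕ, 1 ≤ n → n ≤ e → v (n : K) = 1) :
    cnt v p.derivative x t op ≤ e - 1 := by
  have hp : p ≠ 0 := fun h => by simp [h] at hdeg
  have hc : 0 < v p.leadingCoeff := v.pos (leadingCoeff_ne_zero.2 hp)
  set c := p.leadingCoeff with hcdef
  set sh := p.roots.map (fun z => z - x) with hshdef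
  set shD := p.derivative.roots.map (fun z => z - x) with hshDdef
  set cD := p.derivative.leadingCoeff with hcDdef
  have hvd : v ((e : ℕ) : K) = 1 := hres e he1 (le_refl e)
  have hcast : ((e - 1 : ℕ) : K) + 1 = ((e : ℕ) : K) := by
    have h1 : (e - 1 : ℕ) + 1 = e := by omega
    calc ((e-1:ℕ):K) + 1 = (((e-1)+1 : ℕ) : K) := by push_cast; ring
      _ = _ := by rw [h1]
  set A := p.comp (X + C x) with hAdef
  set B := p.derivative.comp (X + C x) with hBdef
  have hBA : ∀ m : ℕ, B.coeff m = A.coeff (m+1) * (((m : ℕ) : K) + 1) := by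
    intro m
    rw [hBdef, ← deriv_comp_linear, Polynomial.coeff_derivative]
  have lA : ∀ m, v (A.coeff m) = v c * v ((mprod sh).coeff m) := by
    intro m
    rw [hAdef, coeff_comp_linear, v.map_mul]
  have lB : ∀ m, v (B.coeff m) = v cD * v ((mprod shD).coeff m) := by
    intro m
    rw [hBdef, coeff_comp_linear, v.map_mul]
  have hBd : v (B.coeff (e-1)) = v (A.coeff e) := by
    rw [hBA (e-1), v.map_mul, hcast, hvd, mul_one]
    congr 2
    omega
  have hBle : ∀ m : ℕ, v (B.coeff m) ≤ v (A.coeff (m+1)) := by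
    intro m
    rw [hBA m, v.map_mul]
    have h1 : ((m : ℕ) : K) + 1 = ((m+1 : ℕ) : K) := by push_cast; ring
    rw [h1]
    nlinarith [v_nat_le_one hna (m+1), v.nonneg (A.coeff (m+1)), v.nonneg (((m+1:ℕ) : K))]
  by_contra hcon
  push_neg at hcon
  set q' := cnt v p.derivative x t op with hq'def
  have hq'e : e ≤ q' := by omega
  cases op with
  | false =>
    obtain ⟨ma, mb, mc⟩ := master_le (v := v) hna ht sh
    obtain ⟨maD, mbD, mcD⟩ := master_le (v := v) hna ht shD
    have hq0 : qLe v t sh = e := by rw [← hcnt, cnt_false_eq]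
    have hqD : qLe v t shD = q' := (cnt_false_eq p.derivative x t).symm
    set M := v c * MLe v t sh with hMdef
    have hMpos : 0 < M := mul_pos hc (MLe_pos ht sh)
    have key : v (A.coeff e) * t ^ e = M := by
      rw [lA e, mul_assoc, hMdef]
      congr 1
      rw [← hq0]
      exact mc
    have hApos : 0 < v (A.coeff e) := by
      nlinarith [pow_pos ht e, v.nonneg (A.coeff e)]
    have hD : p.derivative ≠ 0 := by
      intro h0
      have : B = 0 := by rw [hBdef, h0, zero_comp]
      rw [this] at hBd
      simp only [coeff_zero, map_zero] at hBd
      linarith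
    have hcD0 : 0 < v cD := v.pos (leadingCoeff_ne_zero.2 hD)
    set M' := v cD * MLe v t shD with hM'def
    have g1 : v (B.coeff q') * t ^ q' = M' := by
      rw [lB q', mul_assoc, hM'def]
      congr 1
      rw [← hqD] at *
      exact mcD
    have g3 : v (A.coeff (q'+1)) * t ^ (q'+1) < M := by
      rw [lA (q'+1), mul_assoc, hMdef]
      refine mul_lt_mul_of_pos_left (mb (q'+1) (by omega)) hc
    have g4 : v (B.coeff (e-1)) * t ^ (e-1) ≤ M' := by
      rw [lB (e-1), mul_assoc, hM'def]
      exact mul_le_mul_of_nonneg_left (maD (e-1)) hcD0.le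
    have e1 : v (A.coeff e) * t ^ (e-1) * t = M := by
      rw [mul_assoc, ← pow_succ]
      have h2 : (e - 1) + 1 = e := by omega
      rw [h2, key]
    have e3 : M' * t < M := by
      rw [← g1, mul_assoc, ← pow_succ]
      calc v (B.coeff q') * t ^ (q'+1) ≤ v (A.coeff (q'+1)) * t ^ (q'+1) :=
            mul_le_mul_of_nonneg_right (hBle q') (by positivity)
        _ < M := g3
    rw [hBd] at g4
    nlinarith
  | true =>
    obtain ⟨ma, mb, mc⟩ := master_lt (v := v) hna ht sh
    obtain ⟨maD, mbD, mcD⟩ := master_lt (v := v) hna ht shD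
    have hq0 : qLt v t sh = e := by rw [← hcnt, cnt_true_eq]
    have hqD : qLt v t shD = q' := (cnt_true_eq p.derivative x t).symm
    set M := v c * MLt v t sh with hMdef
    have hMpos : 0 < M := mul_pos hc (MLt_pos ht sh)
    have key : v (A.coeff e) * t ^ e = M := by
      rw [lA e, mul_assoc, hMdef]
      congr 1
      rw [← hq0]
      exact mc
    have hApos : 0 < v (A.coeff e) := by
      nlinarith [pow_pos ht e, v.nonneg (A.coeff e)]
    have hD : p.derivative ≠ 0 := by
      intro h0
      have : B = 0 := by rw [hBdef, h0, zero_comp]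
      rw [this] at hBd
      simp only [coeff_zero, map_zero] at hBd
      linarith
    have hcD0 : 0 < v cD := v.pos (leadingCoeff_ne_zero.2 hD)
    set M' := v cD * MLt v t shD with hM'def
    have h1 : v (B.coeff (e-1)) * t ^ (e-1) < M' := by
      rw [lB (e-1), mul_assoc, hM'def]
      refine mul_lt_mul_of_pos_left (mbD (e-1) (by omega)) hcD0
    have h2 : v (B.coeff q') * t ^ q' = M' := by
      rw [lB q', mul_assoc, hM'def]
      congr 1
      rw [← hqD] at *
      exact mcD
    have h3 : v (A.coeff (q'+1)) * t ^ (q'+1) ≤ M := by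
      rw [lA (q'+1), mul_assoc, hMdef]
      exact mul_le_mul_of_nonneg_left (ma (q'+1)) hc.le
    have e1 : v (A.coeff e) * t ^ (e-1) * t = M := by
      rw [mul_assoc, ← pow_succ]
      have h4 : (e - 1) + 1 = e := by omega
      rw [h4, key]
    have e3 : M' * t ≤ M := by
      rw [← h2, mul_assoc, ← pow_succ]
      calc v (B.coeff q') * t ^ (q'+1) ≤ v (A.coeff (q'+1)) * t ^ (q'+1) :=
            mul_le_mul_of_nonneg_right (hBle q') (by positivity)
        _ ≤ M := h3
    rw [hBd] at h1
    nlinarith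

end RH

section RadFun
variable {K : Type*} [Field K] [IsAlgClosed K] {v : AbsoluteValue K ℝ}

lemma derivative_sub_C (f : K[X]) (y : K) : (f - C y).derivative = f.derivative := by
  rw [derivative_sub, derivative_C, sub_zero]

lemma vB_nested (hna : IsNonarchimedean ⇑v) {x₁ x₂ : K} {t₁ t₂ : ℝ} (op : Bool)
    (h : (vB v x₁ t₁ op ∩ vB v x₂ t₂ op).Nonempty) :
    vB v x₁ t₁ op ⊆ vB v x₂ t₂ op ∨ vB v x₂ t₂ op ⊆ vB v x₁ t₁ op := by
  obtain ⟨z, hz1, hz2⟩ := h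
  rw [vB_recenter hna op hz1, vB_recenter hna op hz2]
  rcases le_total t₁ t₂ with h | h
  · exact Or.inl (vB_mono op h)
  · exact Or.inr (vB_mono op h)

lemma Rad_split {p : K[X]} {x : K} (hx : x ∈ p.roots) {t : ℝ} (ht : 0 < t) :
    Rad v p x t = v p.leadingCoeff * t *
      (((p.roots.erase x).map (fun d => max t (v (d - x)))).prod) := by
  rw [Rad]
  conv_lhs => rw [← Multiset.cons_erase hx]
  rw [Multiset.map_cons, Multiset.prod_cons]
  have : max t (v (x - x)) = t := by simp [ht.le]
  rw [this]
  ring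

lemma erase_prod_pos {p : K[X]} (x : K) {t : ℝ} (ht : 0 < t) :
    0 < (((p.roots.erase x).map (fun d => max t (v (d - x)))).prod) := by
  refine Multiset.prod_pos ?_
  intro u hu
  rcases Multiset.mem_map.1 hu with ⟨d, _, rfl⟩
  exact lt_of_lt_of_le ht (le_max_left _ _)

lemma erase_prod_mono {p : K[X]} (x : K) {t t' : ℝ} (ht : 0 < t) (htt : t ≤ t') :
    (((p.roots.erase x).map (fun d => max t (v (d - x)))).prod) ≤
      (((p.roots.erase x).map (fun d => max t' (v (d - x)))).prod) := by
  refine mprod_map_le _ _ _ ?_ ?_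
  · intro d _; positivity
  · intro d _; exact max_le_max htt (le_refl _)

lemma Rad_mono (p : K[X]) (x : K) {t t' : ℝ} (ht : 0 < t) (htt : t ≤ t') :
    Rad v p x t ≤ Rad v p x t' := by
  rw [Rad, Rad]
  refine mul_le_mul_of_nonneg_left ?_ (v.nonneg _)
  refine mprod_map_le _ _ _ ?_ ?_
  · intro d _; positivity
  · intro d _; exact max_le_max htt (le_refl _)

lemma Rad_strict {p : K[X]} (hp : p ≠ 0) {x : K} (hx : x ∈ p.roots) {t t' : ℝ}
    (ht : 0 < t) (htt : t < t') : Rad v p x t < Rad v p x t' := by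
  rw [Rad_split hx ht, Rad_split hx (lt_trans ht htt)]
  have hc : 0 < v p.leadingCoeff := v.pos (leadingCoeff_ne_zero.2 hp)
  have h1 := erase_prod_pos (v := v) (p := p) x ht
  have h2 := erase_prod_mono (v := v) (p := p) x ht htt.le
  have h3 : 0 < (((p.roots.erase x).map (fun d => max t' (v (d - x)))).prod) :=
    lt_of_lt_of_le h1 h2
  calc v p.leadingCoeff * t * (((p.roots.erase x).map (fun d => max t (v (d - x)))).prod)
      ≤ v p.leadingCoeff * t * (((p.roots.erase x).map (fun d => max t' (v (d - x)))).prod) :=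
        mul_le_mul_of_nonneg_left h2 (by positivity)
    _ < v p.leadingCoeff * t' * (((p.roots.erase x).map (fun d => max t' (v (d - x)))).prod) :=
        mul_lt_mul_of_pos_right (mul_lt_mul_of_pos_left htt hc) h3

lemma Rad_inj {p : K[X]} (hp : p ≠ 0) {x : K} (hx : x ∈ p.roots) {t t' : ℝ}
    (ht : 0 < t) (ht' : 0 < t') (h : Rad v p x t = Rad v p x t') : t = t' := by
  rcases lt_trichotomy t t' with hlt | heq | hgt
  · exact absurd h (ne_of_lt (Rad_strict hp hx ht hlt))
  · exact heq
  · exact absurd h.symm (ne_of_lt (Rad_strict hp hx ht' hgt))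

lemma Rad_continuous (p : K[X]) (x : K) : Continuous (fun t => Rad v p x t) := by
  unfold Rad
  refine continuous_const.mul ?_
  induction p.roots using Multiset.induction_on with
  | empty => simpa using continuous_const
  | cons a s IH =>
    simp only [Multiset.map_cons, Multiset.prod_cons]
    exact (continuous_id.max continuous_const).mul IH

lemma Rad_upper_scale {p : K[X]} {x : K} (hx : x ∈ p.roots) {t t' : ℝ}
    (ht' : 0 < t') (htt : t' ≤ t) : Rad v p x t' ≤ (t'/t) * Rad v p x t := by
  have ht : 0 < t := lt_of_lt_of_le ht' htt
  rw [Rad_split hx ht', Rad_split hx ht]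
  have h2 := erase_prod_mono (v := v) (p := p) x ht' htt
  have hc : 0 ≤ v p.leadingCoeff := v.nonneg _
  have h1 : 0 ≤ (((p.roots.erase x).map (fun d => max t' (v (d - x)))).prod) :=
    (erase_prod_pos (v := v) x ht').le
  have key : v p.leadingCoeff * t' * (((p.roots.erase x).map (fun d => max t' (v (d - x)))).prod)
      ≤ v p.leadingCoeff * t' * (((p.roots.erase x).map (fun d => max t (v (d - x)))).prod) := by
    refine mul_le_mul_of_nonneg_left h2 (by positivity)
  refine key.trans ?_
  rw [div_mul_eq_mul_div, le_div_iff₀ ht]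
  ring_nf
  nlinarith [erase_prod_pos (v := v) (p := p) x ht, ht'.le, hc]

lemma Rad_lower_pow (p : K[X]) (x : K) {t : ℝ} (ht : 0 < t) :
    v p.leadingCoeff * t ^ (p.roots.card) ≤ Rad v p x t := by
  rw [Rad]
  refine mul_le_mul_of_nonneg_left ?_ (v.nonneg _)
  have hconst : t ^ (p.roots.card) = (p.roots.map (fun _ => t)).prod := by
    rw [Multiset.map_const', Multiset.prod_replicate]
  rw [hconst]
  refine mprod_map_le _ _ _ ?_ ?_
  · intro d _; exact ht.le
  · intro d _; exact le_max_left _ _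

/-- solving `Rad = s₁` -/
lemma Rad_solve {p : K[X]} (hdeg : 1 ≤ p.natDegree) {x : K} (hx : x ∈ p.roots)
    {s₁ : ℝ} (hs : 0 < s₁) : ∃ t, 0 < t ∧ Rad v p x t = s₁ := by
  have hp : p ≠ 0 := fun h => by simp [h] at hdeg
  have hc : 0 < v p.leadingCoeff := v.pos (leadingCoeff_ne_zero.2 hp)
  set thi := max 1 (s₁ / v p.leadingCoeff) with hthidef
  have hthi1 : (1:ℝ) ≤ thi := le_max_left _ _
  have hthi0 : 0 < thi := lt_of_lt_of_le one_pos hthi1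
  have hRhi : s₁ ≤ Rad v p x thi := by
    have h1 := Rad_lower_pow (v := v) p x hthi0
    have hn1 : 1 ≤ p.roots.card := by rw [card_roots_eq]; exact hdeg
    have h2 : thi ≤ thi ^ (p.roots.card) := le_self_pow₀ hthi1 (by omega)
    have h3 : s₁ / v p.leadingCoeff ≤ thi := le_max_right _ _
    have h4 : s₁ ≤ v p.leadingCoeff * thi := by
      rw [div_le_iff₀ hc] at h3
      linarith [mul_comm (v p.leadingCoeff) thi]
    nlinarith
  have hRpos : 0 < Rad v p x thi := Rad_pos hthi0 hp x
  set tlo := thi * min 1 (s₁ / Rad v p x thi) with htlodef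
  have hmin0 : 0 < min 1 (s₁ / Rad v p x thi) := lt_min one_pos (div_pos hs hRpos)
  have htlo0 : 0 < tlo := mul_pos hthi0 hmin0
  have htlothi : tlo ≤ thi := by
    nlinarith [min_le_left 1 (s₁ / Rad v p x thi)]
  have hRlo : Rad v p x tlo ≤ s₁ := by
    have h1 := Rad_upper_scale (v := v) hx htlo0 htlothi
    have h2 : tlo / thi = min 1 (s₁ / Rad v p x thi) := by
      rw [htlodef]; field_simp
    rw [h2] at h1
    refine h1.trans ?_
    have h3 : min 1 (s₁ / Rad v p x thi) ≤ s₁ / Rad v p x thi := min_le_right _ _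
    calc min 1 (s₁ / Rad v p x thi) * Rad v p x thi
        ≤ (s₁ / Rad v p x thi) * Rad v p x thi :=
          mul_le_mul_of_nonneg_right h3 hRpos.le
      _ = s₁ := by field_simp
  have hcont : ContinuousOn (fun t => Rad v p x t) (Set.Icc tlo thi) :=
    (Rad_continuous p x).continuousOn
  have hivt := intermediate_value_Icc htlothi hcont
  have hmem : s₁ ∈ Set.Icc (Rad v p x tlo) (Rad v p x thi) := ⟨hRlo, hRhi⟩
  obtain ⟨t, htmem, hteq⟩ := hivt hmem
  exact ⟨t, lt_of_lt_of_le htlo0 htmem.1, hteq⟩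

lemma Rad_recenter (hna : IsNonarchimedean ⇑v) (p : K[X]) {x x' : K} {t : ℝ}
    (h : v (x - x') ≤ t) : Rad v p x t = Rad v p x' t := by
  rw [Rad, Rad]
  congr 1
  refine congrArg Multiset.prod (Multiset.map_congr rfl ?_)
  intro d _
  rcases le_or_gt (v (d - x)) t with h1 | h1
  · have h2 : v (d - x') ≤ t := by
      have : v (d - x') ≤ max (v (d - x)) (v (x - x')) := by
        have := hna (d - x) (x - x')
        simpa [sub_add_sub_cancel] using this
      exact this.trans (max_le h1 h)
    rw [max_eq_left h1, max_eq_left h2]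
  · have h2 : v (d - x') = v (d - x) := by
      have heq : d - x' = (d - x) + (x - x') := by ring
      have hne : v (d - x) ≠ v (x - x') := by
        intro hcc
        rw [hcc] at h1
        linarith
      have h3 := IsNonarchimedean.add_eq_max_of_ne (f := v) hna hne
      rw [heq, h3, max_eq_left (by linarith)]
    rw [h2]

/-- witness of value exactly `Rad v p x ρ` -/
lemma exists_val_Rad {p : K[X]} (x : K) {rho : ℝ} {z : K} (hz : v (z - x) = rho)
    (hrho : 0 < rho) : ∃ w : K, v w = Rad v p x rho := by
  refine ⟨p.leadingCoeff * ((p.roots.map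
    (fun d => if v (d - x) ≤ rho then (z - x) else (d - x))).prod), ?_⟩
  rw [v.map_mul, map_multiset_prod (v : AbsoluteValue K ℝ), Multiset.map_map, Rad]
  congr 1
  refine congrArg Multiset.prod (Multiset.map_congr rfl ?_)
  intro d _
  simp only [Function.comp_apply]
  by_cases h1 : v (d - x) ≤ rho
  · rw [if_pos h1, hz, max_eq_left h1]
  · rw [if_neg h1, max_eq_right (le_of_lt (not_le.1 h1))]

end RadFun

section Main
variable {K : Type*} [Field K] [IsAlgClosed K] {v : AbsoluteValue K ℝ}

lemma aux_side (hna : IsNonarchimedean ⇑v)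
    (f : K[X]) (U V : Set K) {r : ℝ} (aU : K) (opU : Bool) (hr : 0 < r)
    (hUeq : U = vB v aU r opU)
    (e : ℕ) (he : 1 ≤ e)
    (hres : ∀ n : ℕ, 1 ≤ n → n ≤ e → v (n : K) = 1)
    (hmaps : Set.MapsTo (fun z => f.eval z) U V)
    (hdeg : ∀ y ∈ V, mapDegreeOn f U y = e)
    (y₁ : K) {s₁ : ℝ} (op₁ : Bool) (hs₁ : 0 < s₁)
    (hWV : vB v y₁ s₁ op₁ ⊆ V)
    (hVne : ∃ y', y' ∈ V ∧ y' ∉ vB v y₁ s₁ op₁) :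
    (∃ D : Set K, IsDiskComponent v (U ∩ (fun z => f.eval z) ⁻¹' (vB v y₁ s₁ op₁)) D ∧
        Set.BijOn (fun z => f.eval z) D (vB v y₁ s₁ op₁))
    ∨ ∃ S : Set K, S ⊆ U ∧ (∀ z ∈ S, f.eval z ∈ vB v y₁ s₁ op₁) ∧
        e ≤ 2 * ((f.derivative.roots.filter (· ∈ S)).card) := by
  classical
  set W := vB v y₁ s₁ op₁ with hWdef
  have hy₁W : y₁ ∈ W := self_mem_vB hs₁ op₁
  have hy₁V : y₁ ∈ V := hWV hy₁W
  set g := f - C y₁ with hgdef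
  have hdegU : ∀ y ∈ V, (((f - C y).roots.filter (· ∈ U)).card) = e := by
    intro y hy
    exact hdeg y hy
  have hroot_ex : ∀ y ∈ V, ∃ z, z ∈ U ∧ f.eval z = y := by
    intro y hy
    have h1 := hdegU y hy
    have h2 : ((f - C y).roots.filter (· ∈ U)) ≠ 0 := by
      intro h0
      rw [h0] at h1
      simp at h1
      omega
    obtain ⟨z, hz⟩ := Multiset.exists_mem_of_ne_zero h2
    have hz1 := Multiset.mem_filter.1 hz
    refine ⟨z, hz1.2, ?_⟩
    have h3 := isRoot_of_mem_roots hz1.1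
    rw [IsRoot, eval_sub, eval_C, sub_eq_zero] at h3
    exact h3
  have hgdeg : ∀ y ∈ V, 1 ≤ (f - C y).natDegree := by
    intro y hy
    have h1 := hdegU y hy
    have h2 : ((f - C y).roots.filter (· ∈ U)).card ≤ (f - C y).roots.card :=
      Multiset.card_le_card (Multiset.filter_le _ _)
    have h3 := Polynomial.card_roots' (f - C y)
    omega
  have hgdeg1 : 1 ≤ g.natDegree := hgdeg y₁ hy₁V
  have hg0 : g ≠ 0 := by
    intro h
    rw [hgdef] at h
    rw [hgdef, h, natDegree_zero] at hgdeg1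
    omega
  -- per-root radius
  have hcon : ∀ x : K, ∃ t : ℝ, (x ∈ g.roots ∧ x ∈ U) →
      (0 < t ∧ Rad v g x t = s₁ ∧ vB v x t op₁ ⊆ U) := by
    intro x
    by_cases hmem : x ∈ g.roots ∧ x ∈ U
    swap
    · exact ⟨1, fun h => absurd h hmem⟩
    obtain ⟨hx, hxU⟩ := hmem
    have hUx : U = vB v x r opU := by
      rw [hUeq]
      exact vB_recenter hna opU (hUeq ▸ hxU)
    set Ru := Rad v g x r with hRudef
    have hgf : ∀ z : K, g.eval z = f.eval z - y₁ := by
      intro z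
      rw [hgdef, eval_sub, eval_C]
    have himg_to : ∀ z ∈ U, f.eval z ∈ vB v y₁ Ru opU := by
      intro z hz
      rw [hUx] at hz
      cases opU with
      | false =>
        have := sup_false hna g x z (mem_vB_false.1 hz)
        rw [hgf z] at this
        exact mem_vB_false.2 this
      | true =>
        have := sup_true hna hx z hr (mem_vB_true.1 hz)
        rw [hgf z] at this
        exact mem_vB_true.2 this
    have himg_from : ∀ y ∈ vB v y₁ Ru opU, ∃ z, z ∈ U ∧ f.eval z = y := by
      intro y hy
      cases opU with
      | false =>
        obtain ⟨z, hz1, hz2⟩ := surj_false hna hgdeg1 hx hr (mem_vB_false.1 hy)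
        refine ⟨z, hUx ▸ mem_vB_false.2 hz1, ?_⟩
        rw [hgf z] at hz2
        exact sub_left_inj.mp hz2
      | true =>
        obtain ⟨z, hz1, hz2⟩ := surj_true hna hgdeg1 hx hr (mem_vB_true.1 hy)
        refine ⟨z, hUx ▸ mem_vB_true.2 hz1, ?_⟩
        rw [hgf z] at hz2
        exact sub_left_inj.mp hz2
    have hVeq : V = vB v y₁ Ru opU := by
      apply Set.Subset.antisymm
      · intro y hy
        obtain ⟨z, hzU, hzy⟩ := hroot_ex y hy
        rw [← hzy]
        exact himg_to z hzU
      · intro y hy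
        obtain ⟨z, hzU, hzy⟩ := himg_from y hy
        rw [← hzy]
        exact hmaps hzU
    have hs₁Ru : s₁ ≤ Ru := by
      by_contra hcon'
      push_neg at hcon'
      obtain ⟨y', hy'V, hy'W⟩ := hVne
      refine hy'W ?_
      rw [hVeq] at hy'V
      have hlt : v (y' - y₁) < s₁ := by
        cases opU with
        | false => exact lt_of_le_of_lt (mem_vB_false.1 hy'V) hcon'
        | true => exact lt_trans (mem_vB_true.1 hy'V) hcon'
      rw [hWdef]
      cases op₁ with
      | false => exact mem_vB_false.2 hlt.le
      | true => exact mem_vB_true.2 hlt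
    have hstrict_case : op₁ = false → opU = true → s₁ < Ru := by
      intro hop₁ hopU
      rcases lt_or_eq_of_le hs₁Ru with h | h
      · exact h
      · exfalso
        obtain ⟨y', hy'V, hy'W⟩ := hVne
        refine hy'W ?_
        rw [hVeq, hopU] at hy'V
        rw [hWdef, hop₁]
        refine mem_vB_false.2 ?_
        rw [h]
        exact (mem_vB_true.1 hy'V).le
    obtain ⟨t, ht0, htR⟩ := Rad_solve hgdeg1 hx hs₁
    have htr : t ≤ r := by
      by_contra hcon'
      push_neg at hcon'
      have := Rad_strict (v := v) hg0 hx hr hcon'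
      rw [htR] at this
      rw [← hRudef] at this
      linarith
    refine ⟨t, fun _ => ⟨ht0, htR, ?_⟩⟩
    rw [hUx]
    intro z hz
    cases hop₁ : op₁ with
    | true =>
      rw [hop₁] at hz
      have hzt : v (z - x) < t := mem_vB_true.1 hz
      cases opU with
      | false => exact mem_vB_false.2 (le_of_lt (lt_of_lt_of_le hzt htr))
      | true => exact mem_vB_true.2 (lt_of_lt_of_le hzt htr)
    | false =>
      rw [hop₁] at hz
      have hzt : v (z - x) ≤ t := mem_vB_false.1 hz
      cases hopU : opU with
      | false => exact mem_vB_false.2 (hzt.trans htr)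
      | true =>
        have hs : s₁ < Ru := hstrict_case hop₁ hopU
        have htlt : t < r := by
          rcases lt_or_eq_of_le htr with h | h
          · exact h
          · exfalso
            rw [h] at htR
            rw [← hRudef] at htR
            linarith
        exact mem_vB_true.2 (lt_of_le_of_lt hzt htlt)
  choose T hT using hcon
  set D : K → Set K := fun x => vB v x (T x) op₁ with hDdef
  have hT0 : ∀ x, x ∈ g.roots → x ∈ U → 0 < T x := fun x h1 h2 => (hT x ⟨h1, h2⟩).1
  have hTR : ∀ x, x ∈ g.roots → x ∈ U → Rad v g x (T x) = s₁ :=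
    fun x h1 h2 => (hT x ⟨h1, h2⟩).2.1
  have hDU : ∀ x, x ∈ g.roots → x ∈ U → D x ⊆ U := fun x h1 h2 => (hT x ⟨h1, h2⟩).2.2
  have hself : ∀ x, x ∈ g.roots → x ∈ U → x ∈ D x :=
    fun x h1 h2 => self_mem_vB (hT0 x h1 h2) op₁
  have hgf : ∀ z : K, g.eval z = f.eval z - y₁ := by
    intro z
    rw [hgdef, eval_sub, eval_C]
  have hmapsD : ∀ x, x ∈ g.roots → x ∈ U → ∀ z ∈ D x, f.eval z ∈ W := by
    intro x h1 h2 z hz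
    have hzB : z ∈ vB v x (T x) op₁ := hz
    rw [hWdef]
    cases hop : op₁ with
    | false =>
      rw [hop] at hzB
      have h3 := sup_false hna g x z (mem_vB_false.1 hzB)
      rw [hgf z, hTR x h1 h2] at h3
      exact mem_vB_false.2 h3
    | true =>
      rw [hop] at hzB
      have h3 := sup_true hna h1 z (hT0 x h1 h2) (mem_vB_true.1 hzB)
      rw [hgf z, hTR x h1 h2] at h3
      exact mem_vB_true.2 h3
  have hsurjD : ∀ x, x ∈ g.roots → x ∈ U → ∀ y ∈ W, ∃ z, z ∈ D x ∧ f.eval z = y := by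
    intro x h1 h2 y hy
    rw [hWdef] at hy
    cases hop : op₁ with
    | false =>
      rw [hop] at hy
      have hw : v (y - y₁) ≤ Rad v g x (T x) := by
        rw [hTR x h1 h2]
        exact mem_vB_false.1 hy
      obtain ⟨z, hz1, hz2⟩ := surj_false hna hgdeg1 h1 (hT0 x h1 h2) hw
      refine ⟨z, ?_, ?_⟩
      · show z ∈ vB v x (T x) op₁
        rw [hop]
        exact mem_vB_false.2 hz1
      · rw [hgf z] at hz2
        exact sub_left_inj.mp hz2
    | true =>
      rw [hop] at hy
      have hw : v (y - y₁) < Rad v g x (T x) := by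
        rw [hTR x h1 h2]
        exact mem_vB_true.1 hy
      obtain ⟨z, hz1, hz2⟩ := surj_true hna hgdeg1 h1 (hT0 x h1 h2) hw
      refine ⟨z, ?_, ?_⟩
      · show z ∈ vB v x (T x) op₁
        rw [hop]
        exact mem_vB_true.2 hz1
      · rw [hgf z] at hz2
        exact sub_left_inj.mp hz2
  have hfib : ∀ x, x ∈ g.roots → x ∈ U → ∀ y ∈ W,
      ((f - C y).roots.filter (· ∈ D x)).card = cnt v g x (T x) op₁ := by
    intro x h1 h2 y hy
    rw [hWdef] at hy
    have hfy : f - C y = g - C (y - y₁) := by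
      rw [hgdef, C_sub]
      ring
    have hcnt : cnt v (g - C (y - y₁)) x (T x) op₁ = cnt v g x (T x) op₁ := by
      cases hop : op₁ with
      | false =>
        refine cnt_sub_false hna hgdeg1 h1 (hT0 x h1 h2) ?_
        rw [hTR x h1 h2]
        rw [hop] at hy
        exact mem_vB_false.1 hy
      | true =>
        refine cnt_sub_true hna hgdeg1 h1 (hT0 x h1 h2) ?_
        rw [hTR x h1 h2]
        rw [hop] at hy
        exact mem_vB_true.1 hy
    rw [hfy, ← hcnt]
    rfl
  set dloc : K → ℕ := fun x => cnt v g x (T x) op₁ with hdlocdef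
  have hd1 : ∀ x, x ∈ g.roots → x ∈ U → 1 ≤ dloc x := by
    intro x h1 h2
    show 1 ≤ (g.roots.filter (· ∈ vB v x (T x) op₁)).card
    exact Multiset.card_pos_iff_exists_mem.2 ⟨x, Multiset.mem_filter.2 ⟨h1, hself x h1 h2⟩⟩
  have hde : ∀ x, x ∈ g.roots → x ∈ U → dloc x ≤ e := by
    intro x h1 h2
    have hmono : g.roots.filter (· ∈ vB v x (T x) op₁) ≤ g.roots.filter (· ∈ U) :=
      Multiset.monotone_filter_right _ (fun z hz => hDU x h1 h2 hz)
    have h3 := Multiset.card_le_card hmono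
    have hU := hdegU y₁ hy₁V
    rw [← hgdef] at hU
    have h4 : dloc x = (g.roots.filter (· ∈ vB v x (T x) op₁)).card := rfl
    omega
  have hmerge : ∀ x, x ∈ g.roots → x ∈ U → ∀ x', x' ∈ g.roots → x' ∈ U → x' ∈ D x →
      T x' = T x ∧ D x' = D x := by
    intro x h1 h2 x' h1' h2' hx'D
    have hx'B : x' ∈ vB v x (T x) op₁ := hx'D
    have hdist : v (x - x') ≤ T x := by
      have h3 : v (x' - x) ≤ T x := by
        cases hop : op₁ with
        | false =>
          rw [hop] at hx'B
          exact mem_vB_false.1 hx'B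
        | true =>
          rw [hop] at hx'B
          exact (mem_vB_true.1 hx'B).le
      rwa [← v.map_neg, neg_sub] at h3
    have hrc : Rad v g x' (T x) = s₁ := by
      rw [← Rad_recenter hna g hdist]
      exact hTR x h1 h2
    have hTT : T x' = T x :=
      Rad_inj hg0 h1' (hT0 x' h1' h2') (hT0 x h1 h2) (by rw [hTR x' h1' h2', hrc])
    refine ⟨hTT, ?_⟩
    show vB v x' (T x') op₁ = vB v x (T x) op₁
    rw [hTT]
    exact (vB_recenter hna op₁ hx'B).symm
  have hDeq : ∀ x, x ∈ g.roots → x ∈ U → ∀ x', x' ∈ g.roots → x' ∈ U →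
      (D x ∩ D x').Nonempty → D x = D x' := by
    intro x h1 h2 x' h1' h2' hne
    rcases vB_nested hna op₁
        (show (vB v x (T x) op₁ ∩ vB v x' (T x') op₁).Nonempty from hne) with hsub | hsub
    · have hxmem : x ∈ D x' := hsub (hself x h1 h2)
      exact (hmerge x' h1' h2' x h1 h2 hxmem).2
    · have hxmem : x' ∈ D x := hsub (hself x' h1' h2')
      exact ((hmerge x h1 h2 x' h1' h2' hxmem).2).symm
  by_cases hbij : ∃ x, x ∈ g.roots ∧ x ∈ U ∧ dloc x = 1
  · obtain ⟨x, h1, h2, hd⟩ := hbij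
    left
    refine ⟨D x, ⟨isDisk_vB (hT0 x h1 h2) op₁, ?_, ?_⟩, ?_, ?_, ?_⟩
    · intro z hz
      exact ⟨hDU x h1 h2 hz, hmapsD x h1 h2 z hz⟩
    · -- maximality
      intro D' hD'disk hDD' hD'S
      obtain ⟨a', r', hr', hD'or⟩ := hD'disk
      have hrep : ∃ op' : Bool, D' = vB v a' r' op' := by
        rcases hD'or with h | h
        · exact ⟨true, h⟩
        · exact ⟨false, h⟩
      obtain ⟨op', hD'eq⟩ := hrep
      have hxD' : x ∈ D' := hDD' (hself x h1 h2)
      have hD'x : D' = vB v x r' op' := by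
        rw [hD'eq]
        exact vB_recenter hna op' (hD'eq ▸ hxD')
      refine Set.Subset.antisymm ?_ hDD'
      intro z hzD'
      by_contra hzD
      set ρ := v (z - x) with hρdef
      have hρcase : (op₁ = false → T x < ρ) ∧ (op₁ = true → T x ≤ ρ) := by
        constructor
        · intro hop
          by_contra hcc
          push_neg at hcc
          refine hzD ?_
          show z ∈ vB v x (T x) op₁
          rw [hop]
          exact mem_vB_false.2 hcc
        · intro hop
          by_contra hcc
          push_neg at hcc
          refine hzD ?_
          show z ∈ vB v x (T x) op₁
          rw [hop]
          exact mem_vB_true.2 hcc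
      have hρ0 : 0 < ρ := by
        cases hop : op₁ with
        | false => exact lt_trans (hT0 x h1 h2) (hρcase.1 hop)
        | true => exact lt_of_lt_of_le (hT0 x h1 h2) (hρcase.2 hop)
      have hBρD' : vB v x ρ false ⊆ D' := by
        intro u hu
        rw [hD'x]
        have hzr' : z ∈ vB v x r' op' := hD'x ▸ hzD'
        cases op' with
        | false => exact mem_vB_false.2 ((mem_vB_false.1 hu).trans (mem_vB_false.1 hzr'))
        | true => exact mem_vB_true.2 (lt_of_le_of_lt (mem_vB_false.1 hu) (mem_vB_true.1 hzr'))
      obtain ⟨w, hwval⟩ := exists_val_Rad (v := v) (p := g) x hρdef.symm hρ0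
      obtain ⟨z', hz'1, hz'2⟩ := surj_false hna hgdeg1 h1 hρ0 (le_of_eq hwval)
      have hz'D' : z' ∈ D' := hBρD' (mem_vB_false.2 hz'1)
      have hz'S := hD'S hz'D'
      have hfz' : f.eval z' ∈ W := hz'S.2
      have hval : v (f.eval z' - y₁) = Rad v g x ρ := by
        rw [← hgf z', hz'2, hwval]
      rw [hWdef] at hfz'
      cases hop : op₁ with
      | false =>
        rw [hop] at hfz'
        have h5 : v (f.eval z' - y₁) ≤ s₁ := mem_vB_false.1 hfz'
        have h6 : s₁ < Rad v g x ρ := by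
          rw [← hTR x h1 h2]
          exact Rad_strict hg0 h1 (hT0 x h1 h2) (hρcase.1 hop)
        rw [hval] at h5
        linarith
      | true =>
        rw [hop] at hfz'
        have h5 : v (f.eval z' - y₁) < s₁ := mem_vB_true.1 hfz'
        have h6 : s₁ ≤ Rad v g x ρ := by
          rw [← hTR x h1 h2]
          exact Rad_mono g x (hT0 x h1 h2) (hρcase.2 hop)
        rw [hval] at h5
        linarith
    · exact fun z hz => hmapsD x h1 h2 z hz
    · -- InjOn
      intro z hz z' hz' hzz
      by_contra hne
      set y := f.eval z with hydef
      have hyW : y ∈ W := hmapsD x h1 h2 z hz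
      have hyV : y ∈ V := hWV hyW
      have hfy0 : (f - C y) ≠ 0 := by
        have h3 := hgdeg y hyV
        intro h
        rw [h, natDegree_zero] at h3
        omega
      have hzr : z ∈ (f - C y).roots := by
        rw [mem_roots hfy0]
        show (f - C y).eval z = 0
        rw [eval_sub, eval_C, hydef, sub_self]
      have hz'r : z' ∈ (f - C y).roots := by
        rw [mem_roots hfy0]
        show (f - C y).eval z' = 0
        rw [eval_sub, eval_C, hydef]
        rw [show f.eval z = f.eval z' from hzz]
        exact sub_self _
      have hcnt1 : ((f - C y).roots.filter (· ∈ D x)).card = 1 := by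
        rw [hfib x h1 h2 y hyW]
        exact hd
      have hpair : (z ::ₘ {z'}) ≤ (f - C y).roots.filter (· ∈ D x) := by
        rw [Multiset.le_iff_count]
        intro a
        rw [Multiset.count_cons, Multiset.count_singleton]
        by_cases haz : a = z
        · subst haz
          rw [if_neg hne, if_pos rfl]
          have : a ∈ (f - C y).roots.filter (· ∈ D x) := Multiset.mem_filter.2 ⟨hzr, hz⟩
          simpa using Multiset.one_le_count_iff_mem.2 this
        · by_cases haz' : a = z'
          · subst haz'
            rw [if_pos rfl, if_neg haz]
            have : a ∈ (f - C y).roots.filter (· ∈ D x) := Multiset.mem_filter.2 ⟨hz'r, hz'⟩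
            simpa using Multiset.one_le_count_iff_mem.2 this
          · rw [if_neg haz', if_neg haz]
            simp
      have h7 := Multiset.card_le_card hpair
      rw [hcnt1] at h7
      simp at h7
    · -- SurjOn
      intro y hy
      obtain ⟨z, hz1, hz2⟩ := hsurjD x h1 h2 y hy
      exact ⟨z, hz1, hz2⟩
  · -- no bijective component: build the counting set
    right
    push_neg at hbij
    have hall2 : ∀ x, x ∈ g.roots → x ∈ U → 2 ≤ dloc x := by
      intro x h1 h2
      have := hbij x h1 h2
      have := hd1 x h1 h2
      omega
    have hRH : ∀ x, x ∈ g.roots → x ∈ U →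
        dloc x - 1 ≤ ((f.derivative.roots.filter (· ∈ D x)).card) := by
      intro x h1 h2
      have h3 := RH_local hna hgdeg1 x (hT0 x h1 h2) op₁ (hd1 x h1 h2) (hde x h1 h2) hres
      have h4 : g.derivative = f.derivative := by
        rw [hgdef]
        exact derivative_sub_C f y₁
      rw [h4] at h3
      exact h3
    set X₁ := (g.roots.filter (· ∈ U)).toFinset with hX₁def
    have G : ∀ n : ℕ, ∀ X : Finset K, X.card ≤ n →
        (∀ x ∈ X, x ∈ g.roots ∧ x ∈ U) →
        (∀ x ∈ X, ∀ x', x' ∈ g.roots → x' ∈ U → x' ∈ D x → x' ∈ X) →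
        ((g.roots.filter (· ∈ ⋃ x ∈ X, D x)).card ≤
          2 * ((f.derivative.roots.filter (· ∈ ⋃ x ∈ X, D x)).card)) := by
      intro n
      induction n with
      | zero =>
        intro X hX _ _
        have hXe : X = ∅ := Finset.card_eq_zero.1 (Nat.le_zero.1 hX)
        subst hXe
        simp only [Finset.notMem_empty, Set.iUnion_of_empty, Set.iUnion_empty]
        have hf : ∀ s : Multiset K, s.filter (· ∈ (∅ : Set K)) = 0 :=
          fun s => Multiset.filter_eq_nil.2 (fun a _ h => h)
        rw [hf, hf]
        simp
      | succ n IH =>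
        intro X hXcard hXmem hXcl
        rcases Finset.eq_empty_or_nonempty X with rfl | ⟨x₀, hx₀⟩
        · simp only [Finset.notMem_empty, Set.iUnion_of_empty, Set.iUnion_empty]
          have hf : ∀ s : Multiset K, s.filter (· ∈ (∅ : Set K)) = 0 :=
            fun s => Multiset.filter_eq_nil.2 (fun a _ h => h)
          rw [hf, hf]
          simp
        obtain ⟨hx₀r, hx₀U⟩ := hXmem x₀ hx₀
        set X' := X.filter (fun x => x ∉ D x₀) with hX'def
        have hX'mem : ∀ x ∈ X', x ∈ g.roots ∧ x ∈ U := by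
          intro x hx
          exact hXmem x (Finset.mem_filter.1 hx).1
        have hX'cl : ∀ x ∈ X', ∀ x', x' ∈ g.roots → x' ∈ U → x' ∈ D x → x' ∈ X' := by
          intro x hx x' h1' h2' hx'D
          obtain ⟨hxX, hxnD⟩ := Finset.mem_filter.1 hx
          obtain ⟨hxr, hxU⟩ := hXmem x hxX
          have hx'X : x' ∈ X := hXcl x hxX x' h1' h2' hx'D
          refine Finset.mem_filter.2 ⟨hx'X, ?_⟩
          intro hx'D₀
          have e1 : D x' = D x := (hmerge x hxr hxU x' h1' h2' hx'D).2
          have e2 : D x' = D x₀ := (hmerge x₀ hx₀r hx₀U x' h1' h2' hx'D₀).2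
          refine hxnD ?_
          have hsx : x ∈ D x := hself x hxr hxU
          rw [← e1, e2] at hsx
          exact hsx
        have hX'card : X'.card ≤ n := by
          have hsub : X' ⊆ X.erase x₀ := by
            intro a ha
            obtain ⟨haX, hanD⟩ := Finset.mem_filter.1 ha
            refine Finset.mem_erase.2 ⟨?_, haX⟩
            intro hax₀
            subst hax₀
            exact hanD (hself a hx₀r hx₀U)
          have h5 := Finset.card_le_card hsub
          rw [Finset.card_erase_of_mem hx₀] at h5
          omega
        have hsplit : (⋃ x ∈ X, D x) = D x₀ ∪ (⋃ x ∈ X', D x) := by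
          apply Set.Subset.antisymm
          · intro z hz
            rw [Set.mem_iUnion₂] at hz
            obtain ⟨x, hxX, hzD⟩ := hz
            by_cases hxD₀ : x ∈ D x₀
            · obtain ⟨hxr, hxU⟩ := hXmem x hxX
              have e1 : D x = D x₀ := (hmerge x₀ hx₀r hx₀U x hxr hxU hxD₀).2
              left
              rw [← e1]
              exact hzD
            · right
              rw [Set.mem_iUnion₂]
              exact ⟨x, Finset.mem_filter.2 ⟨hxX, hxD₀⟩, hzD⟩
          · intro z hz
            rcases hz with hz | hz
            · rw [Set.mem_iUnion₂]
              exact ⟨x₀, hx₀, hz⟩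
            · rw [Set.mem_iUnion₂] at hz ⊢
              obtain ⟨x, hxX', hzD⟩ := hz
              exact ⟨x, (Finset.mem_filter.1 hxX').1, hzD⟩
        have hdisj : ∀ z, z ∈ D x₀ → z ∈ (⋃ x ∈ X', D x) → False := by
          intro z hz1 hz2
          rw [Set.mem_iUnion₂] at hz2
          obtain ⟨x, hxX', hzD⟩ := hz2
          obtain ⟨hxX, hxnD⟩ := Finset.mem_filter.1 hxX'
          obtain ⟨hxr, hxU⟩ := hXmem x hxX
          have e1 : D x₀ = D x := hDeq x₀ hx₀r hx₀U x hxr hxU ⟨z, hz1, hzD⟩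
          refine hxnD ?_
          rw [e1]
          exact hself x hxr hxU
        have hcard_split : ∀ s : Multiset K, (s.filter (· ∈ ⋃ x ∈ X, D x)).card
            = (s.filter (· ∈ D x₀)).card + (s.filter (· ∈ ⋃ x ∈ X', D x)).card := by
          intro s
          have h1 : s.filter (· ∈ ⋃ x ∈ X, D x)
              = s.filter (fun z => z ∈ D x₀ ∨ z ∈ ⋃ x ∈ X', D x) := by
            refine Multiset.filter_congr ?_
            intro z _
            rw [hsplit]
            exact Set.mem_union _ _ _
          have h2 := Multiset.filter_add_filter (fun z => z ∈ D x₀)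
            (fun z => z ∈ ⋃ x ∈ X', D x) s
          have h3 : s.filter (fun z => z ∈ D x₀ ∧ z ∈ ⋃ x ∈ X', D x) = 0 := by
            rw [Multiset.filter_eq_nil]
            intro a _ ha
            exact hdisj a ha.1 ha.2
          have h4 := congrArg Multiset.card h2
          rw [h3] at h4
          simp only [Multiset.card_add, Multiset.card_zero, add_zero] at h4
          rw [h1]
          omega
        have hIH := IH X' hX'card hX'mem hX'cl
        have hA := hcard_split g.roots
        have hDer := hcard_split f.derivative.roots
        have hd₀ : (g.roots.filter (· ∈ D x₀)).card = dloc x₀ := rfl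
        have hRH₀ := hRH x₀ hx₀r hx₀U
        have hall₀ := hall2 x₀ hx₀r hx₀U
        omega
    refine ⟨⋃ x ∈ X₁, D x, ?_, ?_, ?_⟩
    · refine Set.iUnion₂_subset ?_
      intro x hxX
      have hmem := Multiset.mem_filter.1 (Multiset.mem_toFinset.1 hxX)
      exact hDU x hmem.1 hmem.2
    · intro z hz
      rw [Set.mem_iUnion₂] at hz
      obtain ⟨x, hxX, hzD⟩ := hz
      have hmem := Multiset.mem_filter.1 (Multiset.mem_toFinset.1 hxX)
      exact hmapsD x hmem.1 hmem.2 z hzD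
    · have hXmem : ∀ x ∈ X₁, x ∈ g.roots ∧ x ∈ U :=
        fun x hx => Multiset.mem_filter.1 (Multiset.mem_toFinset.1 hx)
      have hXcl : ∀ x ∈ X₁, ∀ x', x' ∈ g.roots → x' ∈ U → x' ∈ D x → x' ∈ X₁ := by
        intro x hx x' h1' h2' _
        exact Multiset.mem_toFinset.2 (Multiset.mem_filter.2 ⟨h1', h2'⟩)
      have hG := G X₁.card X₁ (le_refl _) hXmem hXcl
      have hfull : g.roots.filter (· ∈ ⋃ x ∈ X₁, D x) = g.roots.filter (· ∈ U) := by
        refine Multiset.filter_congr ?_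
        intro z hzr
        constructor
        · intro hz
          rw [Set.mem_iUnion₂] at hz
          obtain ⟨x, hxX, hzD⟩ := hz
          have hmem := Multiset.mem_filter.1 (Multiset.mem_toFinset.1 hxX)
          exact hDU x hmem.1 hmem.2 hzD
        · intro hzU
          rw [Set.mem_iUnion₂]
          exact ⟨z, Multiset.mem_toFinset.2 (Multiset.mem_filter.2 ⟨hzr, hzU⟩),
            hself z hzr hzU⟩
      have he1 : (g.roots.filter (· ∈ U)).card = e := by
        have h6 := hdegU y₁ hy₁V
        rw [← hgdef] at h6
        exact h6
      rw [hfull, he1] at hG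
      exact hG

end Main
/-- Non-Archimedean two-islands lemma: for a polynomial map `f : U → V` of degree
`e ≥ 1` between disks (with `e` less than the residue characteristic if positive) and
disjoint disks `V₁, V₂ ⊆ V`, some disk component of one of the preimages `f⁻¹(Vⱼ)`
is mapped bijectively onto `Vⱼ` by `f`. -/
theorem stmt_11 {K : Type*} [Field K] [IsAlgClosed K]
    (v : AbsoluteValue K ℝ) (hna : IsNonarchimedean ⇑v)
    (f : K[X]) (U V : Set K) (r s : ℝ)
    (hU : IsDiskOfRadius v U r) (hV : IsDiskOfRadius v V s)
    (e : ℕ) (he : 1 ≤ e)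
    (hres : ∀ n : ℕ, 1 ≤ n → n ≤ e → v (n : K) = 1)
    (hmaps : Set.MapsTo (fun z => f.eval z) U V)
    (hdeg : ∀ y ∈ V, mapDegreeOn f U y = e)
    (V₁ V₂ : Set K) (hV₁ : IsDisk v V₁) (hV₂ : IsDisk v V₂)
    (hV₁V : V₁ ⊆ V) (hV₂V : V₂ ⊆ V) (hdisj : Disjoint V₁ V₂) :
    (∃ D : Set K, IsDiskComponent v (U ∩ (fun z => f.eval z) ⁻¹' V₁) D ∧
        Set.BijOn (fun z => f.eval z) D V₁) ∨
      ∃ D : Set K, IsDiskComponent v (U ∩ (fun z => f.eval z) ⁻¹' V₂) D ∧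
        Set.BijOn (fun z => f.eval z) D V₂ := by
  classical
  obtain ⟨hr, aU, hUor⟩ := hU
  obtain ⟨opU, hUeq⟩ : ∃ opb : Bool, U = vB v aU r opb := by
    rcases hUor with h | h
    · exact ⟨true, h⟩
    · exact ⟨false, h⟩
  obtain ⟨y₁, s₁, hs₁, hV₁or⟩ := hV₁
  obtain ⟨op₁, hV₁eq⟩ : ∃ opb : Bool, V₁ = vB v y₁ s₁ opb := by
    rcases hV₁or with h | h
    · exact ⟨true, h⟩
    · exact ⟨false, h⟩
  obtain ⟨y₂, s₂, hs₂, hV₂or⟩ := hV₂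
  obtain ⟨op₂, hV₂eq⟩ : ∃ opb : Bool, V₂ = vB v y₂ s₂ opb := by
    rcases hV₂or with h | h
    · exact ⟨true, h⟩
    · exact ⟨false, h⟩
  have hy₁V₁ : y₁ ∈ V₁ := by
    rw [hV₁eq]
    exact self_mem_vB hs₁ op₁
  have hy₂V₂ : y₂ ∈ V₂ := by
    rw [hV₂eq]
    exact self_mem_vB hs₂ op₂
  have hVne₁ : ∃ y', y' ∈ V ∧ y' ∉ vB v y₁ s₁ op₁ := by
    refine ⟨y₂, hV₂V hy₂V₂, ?_⟩
    intro hc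
    exact Set.disjoint_left.1 hdisj (hV₁eq ▸ hc) hy₂V₂
  have hVne₂ : ∃ y', y' ∈ V ∧ y' ∉ vB v y₂ s₂ op₂ := by
    refine ⟨y₁, hV₁V hy₁V₁, ?_⟩
    intro hc
    exact Set.disjoint_left.1 hdisj hy₁V₁ (hV₂eq ▸ hc)
  have h1 := aux_side hna f U V aU opU hr hUeq e he hres hmaps hdeg y₁ op₁ hs₁
    (hV₁eq ▸ hV₁V) hVne₁
  rcases h1 with ⟨Dd, hcomp, hbij⟩ | ⟨S₁, hS₁U, hS₁W, hS₁cnt⟩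
  · left
    rw [hV₁eq]
    exact ⟨Dd, hcomp, hbij⟩
  have h2 := aux_side hna f U V aU opU hr hUeq e he hres hmaps hdeg y₂ op₂ hs₂
    (hV₂eq ▸ hV₂V) hVne₂
  rcases h2 with ⟨Dd, hcomp, hbij⟩ | ⟨S₂, hS₂U, hS₂W, hS₂cnt⟩
  · right
    rw [hV₂eq]
    exact ⟨Dd, hcomp, hbij⟩
  exfalso
  have hSdisj : ∀ z, z ∈ S₁ → z ∈ S₂ → False := by
    intro z hz1 hz2
    have ha := hS₁W z hz1
    have hb := hS₂W z hz2
    exact Set.disjoint_left.1 hdisj (hV₁eq ▸ ha) (hV₂eq ▸ hb)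
  have hy₁V : y₁ ∈ V := hV₁V hy₁V₁
  have hdegU1 : (((f - C y₁).roots.filter (· ∈ U)).card) = e := hdeg y₁ hy₁V
  have hgdeg1 : 1 ≤ (f - C y₁).natDegree := by
    have h2' : ((f - C y₁).roots.filter (· ∈ U)).card ≤ (f - C y₁).roots.card :=
      Multiset.card_le_card (Multiset.filter_le _ _)
    have h3 := Polynomial.card_roots' (f - C y₁)
    omega
  obtain ⟨x₁, hx₁rU⟩ : ∃ z, z ∈ (f - C y₁).roots.filter (· ∈ U) := by
    refine Multiset.exists_mem_of_ne_zero ?_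
    intro h0
    rw [h0] at hdegU1
    simp at hdegU1
    omega
  have hx₁r : x₁ ∈ (f - C y₁).roots := (Multiset.mem_filter.1 hx₁rU).1
  have hx₁U : x₁ ∈ U := (Multiset.mem_filter.1 hx₁rU).2
  have hUx : U = vB v x₁ r opU := by
    rw [hUeq]
    exact vB_recenter hna opU (hUeq ▸ hx₁U)
  have hcongr : ∀ (sm : Multiset K), sm.filter (· ∈ U) = sm.filter (· ∈ vB v x₁ r opU) := by
    intro sm
    refine Multiset.filter_congr ?_
    intro z _
    rw [hUx]
  have hcntU : cnt v (f - C y₁) x₁ r opU = e := by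
    show (((f - C y₁).roots.filter (· ∈ vB v x₁ r opU)).card) = e
    rw [← hcongr]
    exact hdegU1
  have hglob := RH_global hna hgdeg1 x₁ hr opU he hcntU hres
  rw [derivative_sub_C] at hglob
  -- hglob : cnt v f.derivative x₁ r opU ≤ e - 1
  have hglob' : ((f.derivative.roots.filter (· ∈ U)).card) ≤ e - 1 := by
    rw [hcongr]
    exact hglob
  have hsum : ((f.derivative.roots.filter (· ∈ S₁)).card)
      + ((f.derivative.roots.filter (· ∈ S₂)).card)
      ≤ ((f.derivative.roots.filter (· ∈ U)).card) := by
    have h3 := Multiset.filter_add_filter (fun z => z ∈ S₁) (fun z => z ∈ S₂)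
      f.derivative.roots
    have h4 : f.derivative.roots.filter (fun z => z ∈ S₁ ∧ z ∈ S₂) = 0 := by
      rw [Multiset.filter_eq_nil]
      intro a _ ha
      exact hSdisj a ha.1 ha.2
    have h5 : f.derivative.roots.filter (fun z => z ∈ S₁ ∨ z ∈ S₂) ≤
        f.derivative.roots.filter (· ∈ U) := by
      refine Multiset.monotone_filter_right _ ?_
      intro z hz
      rcases hz with hz | hz
      · exact hS₁U hz
      · exact hS₂U hz
    have h6 := congrArg Multiset.card h3
    rw [h4] at h6
    simp only [Multiset.card_add, Multiset.card_zero, add_zero] at h6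
    have h7 := Multiset.card_le_card h5
    omega
  omega
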